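/- arXiv:2006.07884 — 3 statements merged into one kernel-verified Lean document; each statement's English description precedes it below -/
import Mathlib

section
/- Let p_0, p_1, ..., p_N be N+1 distinct real numbers and let w_0, ..., w_N be positive weights. Let P_n(·;N) be a degree-n polynomial (1 ≤ n ≤ N-1) orthogonal to all polynomials of degree < n with respect to the bilinear form ⟨f,g⟩_N = Σ_{s=0}^{N-1} w_s f(p_s) g(p_s), and let P_n(·;N+1) be a degree-n polynomial orthogonal to all polynomials of degree < n with respect to ⟨f,g⟩_{N+1} = Σ_{s=0}^{N} w_s f(p_s) g(p_s). Let Y_1 < Y_2 < ⋯ < Y_n denote the zeros of P_n(·;N). Then: (i) if P_n(p_N;N) = 0, the zeros of P_n(·;N+1) are exactly those of P_n(·;N); (ii) if P_n(p_N;N) ≠ 0 and p_N ∉ (Y_k, Y_{k+1}) for a fixed k ∈ {1,...,n-1}, then P_n(·;N+1) has a zero in (Y_k, Y_{k+1}); (iii) if P_n(p_N;N) ≠ 0 and p_N ∈ (Y_k, Y_{k+1}) for a fixed k ∈ {1,...,n-1}, then P_n(·;N+1) has a zero in each of the intervals (Y_k, p_N) and (p_N, Y_{k+1}). -/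
open Polynomial Finset in
private lemma aux_vanish (D : Polynomial ℝ) (S : Finset ℕ) (v : ℕ → ℝ)
    (hv : Set.InjOn v ↑S) (hroots : ∀ s ∈ S, D.eval (v s) = 0)
    (hdeg : D.natDegree < S.card) : D = 0 := by
  by_contra hD
  have hsub : S.image v ⊆ D.roots.toFinset := by
    intro x hx
    obtain ⟨s, hs, rfl⟩ := Finset.mem_image.mp hx
    rw [Multiset.mem_toFinset, Polynomial.mem_roots hD]
    exact hroots s hs
  have h1 : S.card = (S.image v).card := (Finset.card_image_of_injOn hv).symm
  have h2 : (S.image v).card ≤ D.roots.toFinset.card := Finset.card_le_card hsub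
  have h3 : D.roots.toFinset.card ≤ Multiset.card D.roots := D.roots.toFinset_card_le
  have h4 : Multiset.card D.roots ≤ D.natDegree := D.card_roots'
  omega

open Polynomial Finset in
private lemma aux_unique (n : ℕ) (S : Finset ℕ) (hcard : n < S.card)
    (p : ℕ → ℝ) (hp : Set.InjOn p ↑S) (w : ℕ → ℝ) (hw : ∀ s ∈ S, 0 < w s)
    (P Q : Polynomial ℝ) (hP : P.natDegree = n) (hQ : Q.natDegree = n)
    (hPo : ∀ f : Polynomial ℝ, f.natDegree < n →
      ∑ s ∈ S, w s * P.eval (p s) * f.eval (p s) = 0)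
    (hQo : ∀ f : Polynomial ℝ, f.natDegree < n →
      ∑ s ∈ S, w s * Q.eval (p s) * f.eval (p s) = 0) :
    Polynomial.C Q.leadingCoeff * P = Polynomial.C P.leadingCoeff * Q := by
  set D : Polynomial ℝ := Polynomial.C Q.leadingCoeff * P - Polynomial.C P.leadingCoeff * Q
    with hD
  rcases eq_or_ne D 0 with h0 | h0
  · rw [hD] at h0
    exact sub_eq_zero.mp h0
  · exfalso
    have hDle : D.natDegree ≤ n := by
      refine le_trans (Polynomial.natDegree_sub_le _ _) (max_le ?_ ?_)
      · exact le_trans (Polynomial.natDegree_C_mul_le _ _) hP.le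
      · exact le_trans (Polynomial.natDegree_C_mul_le _ _) hQ.le
    have hcoeff : D.coeff n = 0 := by
      have e1 : P.coeff n = P.leadingCoeff := by rw [← hP]; rfl
      have e2 : Q.coeff n = Q.leadingCoeff := by rw [← hQ]; rfl
      simp [hD, Polynomial.coeff_sub, Polynomial.coeff_C_mul, e1, e2, mul_comm]
    have hDlt : D.natDegree < n := by
      rcases lt_or_eq_of_le hDle with h | h
      · exact h
      · exact absurd (Polynomial.leadingCoeff_eq_zero.mp
          (by rw [Polynomial.leadingCoeff, h, hcoeff])) h0
    have h1 := hPo D hDlt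
    have h2 := hQo D hDlt
    have hsum : ∑ s ∈ S, w s * D.eval (p s) * D.eval (p s) = 0 := by
      have hc : ∀ s ∈ S, w s * D.eval (p s) * D.eval (p s)
          = Q.leadingCoeff * (w s * P.eval (p s) * D.eval (p s))
            - P.leadingCoeff * (w s * Q.eval (p s) * D.eval (p s)) := by
        intro s _
        have : D.eval (p s) = Q.leadingCoeff * P.eval (p s)
            - P.leadingCoeff * Q.eval (p s) := by
          simp [hD]
        rw [this]; ring
      rw [Finset.sum_congr rfl hc, Finset.sum_sub_distrib, ← Finset.mul_sum, ← Finset.mul_sum,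
        h1, h2]
      ring
    have hzero : ∀ s ∈ S, D.eval (p s) = 0 := by
      intro s hs
      have hterm := (Finset.sum_eq_zero_iff_of_nonneg ?_).mp hsum s hs
      · have hws := hw s hs
        rcases mul_eq_zero.mp hterm with h | h
        · rcases mul_eq_zero.mp h with h' | h'
          · exact absurd h' (ne_of_gt hws)
          · exact h'
        · exact h
      · intro i hi
        have := hw i hi
        nlinarith [mul_self_nonneg (D.eval (p i))]
    exact h0 (aux_vanish D S p hp hzero (lt_trans hDlt hcard))

open Polynomial Finset in
private lemma aux_ivt (f : Polynomial ℝ) (a b : ℝ) (hab : a < b)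
    (h : f.eval a * f.eval b < 0) : ∃ y ∈ Set.Ioo a b, f.eval y = 0 := by
  rcases mul_neg_iff.mp h with ⟨ha, hb⟩ | ⟨ha, hb⟩
  · obtain ⟨y, hy, hy0⟩ := intermediate_value_Ioo' (le_of_lt hab)
      (f.continuous_aeval).continuousOn (Set.mem_Ioo.mpr ⟨hb, ha⟩)
    exact ⟨y, hy, hy0⟩
  · obtain ⟨y, hy, hy0⟩ := intermediate_value_Ioo (le_of_lt hab)
      (f.continuous_aeval).continuousOn (Set.mem_Ioo.mpr ⟨ha, hb⟩)
    exact ⟨y, hy, hy0⟩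

/-- Adding one support point to a discrete orthogonality measure:
behaviour of the zeros of the degree-`n` orthogonal polynomial. -/
theorem stmt_0 (N n : ℕ) (hn : 1 ≤ n) (hnN : n ≤ N - 1)
    (p : ℕ → ℝ) (hp : Set.InjOn p (Set.Iic N))
    (w : ℕ → ℝ) (hw : ∀ s ≤ N, 0 < w s)
    (P Q : Polynomial ℝ)
    (hPdeg : P.natDegree = n)
    (hPorth : ∀ f : Polynomial ℝ, f.natDegree < n →
      ∑ s ∈ Finset.range N, w s * P.eval (p s) * f.eval (p s) = 0)
    (hQdeg : Q.natDegree = n)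
    (hQorth : ∀ f : Polynomial ℝ, f.natDegree < n →
      ∑ s ∈ Finset.range (N + 1), w s * Q.eval (p s) * f.eval (p s) = 0)
    (Y : ℕ → ℝ)
    (hYmono : ∀ i j, 1 ≤ i → i < j → j ≤ n → Y i < Y j)
    (hYroot : ∀ i, 1 ≤ i → i ≤ n → P.eval (Y i) = 0)
    (hYall : ∀ y : ℝ, P.eval y = 0 → ∃ i, 1 ≤ i ∧ i ≤ n ∧ y = Y i) :
    -- (i) if `p N` is a zero of `P`, the zeros of `Q` are exactly those of `P`
    (P.eval (p N) = 0 → ∀ y : ℝ, Q.eval y = 0 ↔ P.eval y = 0) ∧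
    -- (ii) if `p N` is not a zero of `P` and `p N ∉ (Y k, Y (k+1))`,
    -- then `Q` has a zero in `(Y k, Y (k+1))`
    (P.eval (p N) ≠ 0 → ∀ k, 1 ≤ k → k + 1 ≤ n →
      p N ∉ Set.Ioo (Y k) (Y (k + 1)) →
      ∃ y ∈ Set.Ioo (Y k) (Y (k + 1)), Q.eval y = 0) ∧
    -- (iii) if `p N` is not a zero of `P` and `p N ∈ (Y k, Y (k+1))`,
    -- then `Q` has a zero in each of `(Y k, p N)` and `(p N, Y (k+1))`
    (P.eval (p N) ≠ 0 → ∀ k, 1 ≤ k → k + 1 ≤ n →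
      p N ∈ Set.Ioo (Y k) (Y (k + 1)) →
      (∃ y ∈ Set.Ioo (Y k) (p N), Q.eval y = 0) ∧
      (∃ y ∈ Set.Ioo (p N) (Y (k + 1)), Q.eval y = 0)) := by
  classical
  have hN : n + 1 ≤ N := by omega
  have hP0 : P ≠ 0 := by
    intro h; rw [h, Polynomial.natDegree_zero] at hPdeg; omega
  have hQ0 : Q ≠ 0 := by
    intro h; rw [h, Polynomial.natDegree_zero] at hQdeg; omega
  have hlP : P.leadingCoeff ≠ 0 := Polynomial.leadingCoeff_ne_zero.mpr hP0
  have hlQ : Q.leadingCoeff ≠ 0 := Polynomial.leadingCoeff_ne_zero.mpr hQ0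
  have hpN : Set.InjOn p ↑(Finset.range N) := fun a ha b hb hab =>
    hp (by simp at ha ⊢; omega) (by simp at hb ⊢; omega) hab
  have hpN1 : Set.InjOn p ↑(Finset.range (N + 1)) := fun a ha b hb hab =>
    hp (by simp at ha ⊢; omega) (by simp at hb ⊢; omega) hab
  have hwN : ∀ s ∈ Finset.range N, 0 < w s := fun s hs =>
    hw s (by simp at hs; omega)
  have hwN1 : ∀ s ∈ Finset.range (N + 1), 0 < w s := fun s hs =>
    hw s (by simp at hs; omega)
  -- Part (i)
  have part1 : P.eval (p N) = 0 → ∀ y : ℝ, Q.eval y = 0 ↔ P.eval y = 0 := by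
    intro hPN y
    have hPorth' : ∀ f : Polynomial ℝ, f.natDegree < n →
        ∑ s ∈ Finset.range (N + 1), w s * P.eval (p s) * f.eval (p s) = 0 := by
      intro f hf
      rw [Finset.sum_range_succ, hPorth f hf, hPN]
      ring
    have huniq := aux_unique n (Finset.range (N + 1)) (by simp; omega) p hpN1 w hwN1
      P Q hPdeg hQdeg hPorth' hQorth
    have hev := congrArg (Polynomial.eval y) huniq
    simp only [Polynomial.eval_mul, Polynomial.eval_C] at hev
    constructor
    · intro h
      have h2 : Q.leadingCoeff * P.eval y = 0 := by rw [hev, h, mul_zero]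
      rcases mul_eq_zero.mp h2 with h' | h'
      · exact absurd h' hlQ
      · exact h'
    · intro h
      have h2 : P.leadingCoeff * Q.eval y = 0 := by rw [← hev, h, mul_zero]
      rcases mul_eq_zero.mp h2 with h' | h'
      · exact absurd h' hlP
      · exact h'
  -- Q does not vanish at `p N` when P does not
  have hQpN : P.eval (p N) ≠ 0 → Q.eval (p N) ≠ 0 := by
    intro hPN h0
    have hQorth' : ∀ f : Polynomial ℝ, f.natDegree < n →
        ∑ s ∈ Finset.range N, w s * Q.eval (p s) * f.eval (p s) = 0 := by
      intro f hf
      have h := hQorth f hf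
      rw [Finset.sum_range_succ, h0] at h
      simpa using h
    have huniq := aux_unique n (Finset.range N) (by simp; omega) p hpN w hwN
      P Q hPdeg hQdeg hPorth hQorth'
    have hev := congrArg (Polynomial.eval (p N)) huniq
    simp only [Polynomial.eval_mul, Polynomial.eval_C, h0, mul_zero] at hev
    rcases mul_eq_zero.mp hev with h' | h'
    · exact hlQ h'
    · exact hPN h'
  -- Gaussian quadrature setup
  set s0 : Finset ℕ := Finset.Icc 1 n with hs0
  have hcard0 : s0.card = n := by rw [hs0, Nat.card_Icc]; omega
  have hYinj : Set.InjOn Y ↑s0 := by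
    intro i hi j hj hij
    rw [hs0, Finset.coe_Icc, Set.mem_Icc] at hi hj
    rcases lt_trichotomy i j with h | h | h
    · exact absurd hij (ne_of_lt (hYmono i j hi.1 h hj.2))
    · exact h
    · exact absurd hij.symm (ne_of_lt (hYmono j i hj.1 h hi.2))
  set L : ℕ → Polynomial ℝ := fun i => Lagrange.basis s0 Y i with hL
  have hLdeg : ∀ i ∈ s0, (L i).natDegree = n - 1 := by
    intro i hi
    simp only [hL]
    rw [Lagrange.natDegree_basis hYinj hi, hcard0]
  set Pm : Polynomial ℝ := P * Polynomial.C P.leadingCoeff⁻¹ with hPm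
  have hPmMonic : Pm.Monic := Polynomial.monic_mul_leadingCoeff_inv hP0
  have hPmdeg : Pm.natDegree = n := by
    rw [← hPdeg]
    exact Polynomial.natDegree_eq_of_degree_eq (Polynomial.degree_mul_leadingCoeff_inv P hP0)
  set lam : ℕ → ℝ := fun i => ∑ s ∈ Finset.range N, w s * (L i).eval (p s) with hlamdef
  have quad : ∀ g : Polynomial ℝ, g.natDegree ≤ 2 * n - 1 →
      ∑ s ∈ Finset.range N, w s * g.eval (p s) = ∑ i ∈ s0, lam i * g.eval (Y i) := by
    intro g hg
    set q : Polynomial ℝ := Polynomial.C P.leadingCoeff⁻¹ * (g /ₘ Pm) with hq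
    set r : Polynomial ℝ := g %ₘ Pm with hr
    have hgdec : ∀ x : ℝ, g.eval x = P.eval x * q.eval x + r.eval x := by
      intro x
      conv_lhs => rw [← Polynomial.modByMonic_add_div g Pm]
      simp only [hq, hr, hPm, Polynomial.eval_add, Polynomial.eval_mul, Polynomial.eval_C]
      ring
    have hqdeg : q.natDegree < n := by
      have h1 : q.natDegree ≤ (g /ₘ Pm).natDegree := Polynomial.natDegree_C_mul_le _ _
      have h2 : (g /ₘ Pm).natDegree = g.natDegree - Pm.natDegree :=
        Polynomial.natDegree_divByMonic g hPmMonic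
      omega
    have hrdeg : r.degree < (s0.card : WithBot ℕ) := by
      have h1 : r.degree < Pm.degree := Polynomial.degree_modByMonic_lt g hPmMonic
      have h2 : Pm.degree = (n : WithBot ℕ) := by
        rw [Polynomial.degree_eq_natDegree hPmMonic.ne_zero, hPmdeg]
      rw [hcard0]
      rw [h2] at h1
      exact h1
    have hrY : ∀ i ∈ s0, r.eval (Y i) = g.eval (Y i) := by
      intro i hi
      have h := hgdec (Y i)
      rw [hs0, Finset.mem_Icc] at hi
      rw [hYroot i hi.1 hi.2] at h
      simpa using h.symm
    have hinterp : ∀ x : ℝ, r.eval x = ∑ i ∈ s0, g.eval (Y i) * (L i).eval x := by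
      intro x
      conv_lhs => rw [Lagrange.eq_interpolate hYinj hrdeg]
      rw [Lagrange.interpolate_apply, Polynomial.eval_finset_sum]
      refine Finset.sum_congr rfl fun i hi => ?_
      rw [Polynomial.eval_mul, Polynomial.eval_C, hrY i hi]
    calc ∑ s ∈ Finset.range N, w s * g.eval (p s)
        = ∑ s ∈ Finset.range N, (w s * P.eval (p s) * q.eval (p s) + w s * r.eval (p s)) := by
          refine Finset.sum_congr rfl fun s _ => ?_
          rw [hgdec (p s)]; ring
      _ = ∑ s ∈ Finset.range N, w s * r.eval (p s) := by
          rw [Finset.sum_add_distrib, hPorth q hqdeg, zero_add]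
      _ = ∑ s ∈ Finset.range N, ∑ i ∈ s0, w s * (g.eval (Y i) * (L i).eval (p s)) := by
          refine Finset.sum_congr rfl fun s _ => ?_
          rw [hinterp (p s), Finset.mul_sum]
      _ = ∑ i ∈ s0, ∑ s ∈ Finset.range N, w s * (g.eval (Y i) * (L i).eval (p s)) :=
          Finset.sum_comm
      _ = ∑ i ∈ s0, lam i * g.eval (Y i) := by
          refine Finset.sum_congr rfl fun i _ => ?_
          simp only [hlamdef]
          rw [Finset.sum_mul]
          refine Finset.sum_congr rfl fun s _ => ?_
          ring
  have hLne : ∀ i ∈ s0, L i ≠ 0 := fun i hi => Lagrange.basis_ne_zero hYinj hi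
  -- positivity of the Christoffel numbers
  have hlam : ∀ i ∈ s0, 0 < lam i := by
    intro i hi
    have hquad := quad (L i * L i) (by
      have h1 := Polynomial.natDegree_mul_le (p := L i) (q := L i)
      have h2 := hLdeg i hi
      omega)
    have hRHS : ∑ j ∈ s0, lam j * (L i * L i).eval (Y j) = lam i := by
      rw [Finset.sum_eq_single_of_mem i hi]
      · simp only [hL, Polynomial.eval_mul, Lagrange.eval_basis_self hYinj hi]
        ring
      · intro j hj hji
        simp only [hL, Polynomial.eval_mul, Lagrange.eval_basis_of_ne (Ne.symm hji) hj]
        ring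
    have hnz : ∃ s ∈ Finset.range N, (L i).eval (p s) ≠ 0 := by
      by_contra hall
      push_neg at hall
      refine hLne i hi (aux_vanish (L i) (Finset.range N) p hpN (fun s hs => hall s hs) ?_)
      rw [Finset.card_range, hLdeg i hi]; omega
    obtain ⟨s, hs, hsne⟩ := hnz
    have hpos : 0 < ∑ s ∈ Finset.range N, w s * (L i * L i).eval (p s) := by
      refine Finset.sum_pos' ?_ ⟨s, hs, ?_⟩
      · intro t ht
        have := hwN t ht
        rw [Polynomial.eval_mul]
        nlinarith [mul_self_nonneg ((L i).eval (p t))]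
      · rw [Polynomial.eval_mul]
        exact mul_pos (hwN s hs) (mul_self_pos.mpr hsne)
    rw [hquad, hRHS] at hpos
    exact hpos
  -- the key sign identity
  have hkey : ∀ i ∈ s0, lam i * Q.eval (Y i)
      = -(w N * Q.eval (p N)) * (L i).eval (p N) := by
    intro i hi
    have hquad := quad (Q * L i) (by
      have h1 := Polynomial.natDegree_mul_le (p := Q) (q := L i)
      have h2 := hLdeg i hi
      omega)
    have hRHS : ∑ j ∈ s0, lam j * (Q * L i).eval (Y j) = lam i * Q.eval (Y i) := by
      rw [Finset.sum_eq_single_of_mem i hi]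
      · simp only [hL, Polynomial.eval_mul, Lagrange.eval_basis_self hYinj hi]
        ring
      · intro j hj hji
        simp only [hL, Polynomial.eval_mul, Lagrange.eval_basis_of_ne (Ne.symm hji) hj]
        ring
    have hLHS : ∑ s ∈ Finset.range N, w s * (Q * L i).eval (p s)
        = -(w N * Q.eval (p N)) * (L i).eval (p N) := by
      have horth := hQorth (L i) (by rw [hLdeg i hi]; omega)
      rw [Finset.sum_range_succ] at horth
      have he : ∑ s ∈ Finset.range N, w s * (Q * L i).eval (p s)
          = ∑ s ∈ Finset.range N, w s * Q.eval (p s) * (L i).eval (p s) := by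
        refine Finset.sum_congr rfl fun s _ => ?_
        rw [Polynomial.eval_mul]; ring
      rw [he]
      linarith [horth]
    rw [← hRHS, ← hquad, hLHS]
  -- explicit evaluation of the Lagrange basis at `p N`
  have hLeval : ∀ i : ℕ, (L i).eval (p N)
      = ∏ j ∈ s0.erase i, ((Y i - Y j)⁻¹ * (p N - Y j)) := by
    intro i
    simp only [hL]
    rw [Lagrange.basis, Polynomial.eval_prod]
    refine Finset.prod_congr rfl fun j _ => ?_
    rw [Lagrange.basisDivisor]
    simp
  have hwNpos := hw N le_rfl
  refine ⟨part1, ?_, ?_⟩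
  · -- Part (ii)
    intro hPN k hk1 hk2 hNo
    have hQp := hQpN hPN
    have hYne : ∀ j, 1 ≤ j → j ≤ n → p N ≠ Y j := fun j h1 h2 h =>
      hPN (by rw [h]; exact hYroot j h1 h2)
    have hkmem : k ∈ s0 := by rw [hs0, Finset.mem_Icc]; omega
    have hk1mem : k + 1 ∈ s0 := by rw [hs0, Finset.mem_Icc]; omega
    have hkk : Y k < Y (k + 1) := hYmono k (k + 1) hk1 (by omega) hk2
    have hside : 0 < (p N - Y k) * (p N - Y (k + 1)) := by
      have h1 := hYne k hk1 (by omega)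
      have h2 := hYne (k + 1) (by omega) hk2
      rcases lt_or_gt_of_ne h1 with h | h
      · have : p N < Y (k + 1) := lt_trans h hkk
        nlinarith
      · rcases lt_or_gt_of_ne h2 with h' | h'
        · exact absurd (Set.mem_Ioo.mpr ⟨h, h'⟩) hNo
        · nlinarith
    set F : Finset ℕ := (s0.erase k).erase (k + 1) with hF
    have hk1F : (k + 1) ∉ F := Finset.notMem_erase _ _
    have hkF : k ∉ F := by
      intro h
      exact Finset.notMem_erase k s0 (Finset.mem_of_mem_erase h)
    have hins1 : s0.erase k = insert (k + 1) F := by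
      rw [hF]
      exact (Finset.insert_erase (Finset.mem_erase.mpr ⟨by omega, hk1mem⟩)).symm
    have hins2 : s0.erase (k + 1) = insert k F := by
      rw [hF, Finset.erase_right_comm]
      exact (Finset.insert_erase (Finset.mem_erase.mpr ⟨by omega, hkmem⟩)).symm
    have hFprod : 0 < (∏ j ∈ F, ((Y k - Y j)⁻¹ * (p N - Y j)))
        * (∏ j ∈ F, ((Y (k + 1) - Y j)⁻¹ * (p N - Y j))) := by
      rw [← Finset.prod_mul_distrib]
      refine Finset.prod_pos ?_
      intro j hj
      have hj1 : j ∈ s0.erase k := Finset.mem_of_mem_erase hj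
      have hjne1 : j ≠ k + 1 := Finset.ne_of_mem_erase hj
      have hjne : j ≠ k := Finset.ne_of_mem_erase hj1
      have hjIcc : j ∈ s0 := Finset.mem_of_mem_erase hj1
      rw [hs0, Finset.mem_Icc] at hjIcc
      obtain ⟨hj1', hjn⟩ := hjIcc
      have hsq : 0 < (p N - Y j) * (p N - Y j) :=
        mul_self_pos.mpr (sub_ne_zero.mpr (hYne j hj1' hjn))
      have hrearr : ((Y k - Y j)⁻¹ * (p N - Y j)) * ((Y (k + 1) - Y j)⁻¹ * (p N - Y j))
          = ((Y k - Y j)⁻¹ * (Y (k + 1) - Y j)⁻¹) * ((p N - Y j) * (p N - Y j)) := by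
        ring
      rw [hrearr]
      rcases Nat.lt_or_ge j k with h | h
      · have ha : 0 < Y k - Y j := sub_pos.mpr (hYmono j k hj1' h (by omega))
        have hb : 0 < Y (k + 1) - Y j := sub_pos.mpr (hYmono j (k + 1) hj1' (by omega) hk2)
        exact mul_pos (mul_pos (inv_pos.mpr ha) (inv_pos.mpr hb)) hsq
      · have h' : k + 1 < j := by omega
        have ha : Y k - Y j < 0 := sub_neg.mpr (hYmono k j hk1 (by omega) hjn)
        have hb : Y (k + 1) - Y j < 0 := sub_neg.mpr (hYmono (k + 1) j (by omega) h' hjn)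
        exact mul_pos (mul_pos_of_neg_of_neg (inv_lt_zero.mpr ha) (inv_lt_zero.mpr hb)) hsq
    have hheadneg : ((Y k - Y (k + 1))⁻¹ * (p N - Y (k + 1)))
        * ((Y (k + 1) - Y k)⁻¹ * (p N - Y k)) < 0 := by
      have hd : 0 < Y (k + 1) - Y k := sub_pos.mpr hkk
      have hinv : 0 < (Y (k + 1) - Y k)⁻¹ := inv_pos.mpr hd
      have he : ((Y k - Y (k + 1))⁻¹ * (p N - Y (k + 1))) * ((Y (k + 1) - Y k)⁻¹ * (p N - Y k))
          = -(((Y (k + 1) - Y k)⁻¹ * (Y (k + 1) - Y k)⁻¹) * ((p N - Y k) * (p N - Y (k + 1)))) := by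
        rw [show Y k - Y (k + 1) = -(Y (k + 1) - Y k) by ring, inv_neg]
        ring
      rw [he]
      have := mul_pos (mul_pos hinv hinv) hside
      linarith
    have hEneg : (L k).eval (p N) * (L (k + 1)).eval (p N) < 0 := by
      rw [hLeval k, hLeval (k + 1), hins1, hins2, Finset.prod_insert hk1F,
        Finset.prod_insert hkF]
      have hcomb := mul_neg_of_neg_of_pos hheadneg hFprod
      have he : (((Y k - Y (k + 1))⁻¹ * (p N - Y (k + 1)))
              * ∏ j ∈ F, ((Y k - Y j)⁻¹ * (p N - Y j)))
          * (((Y (k + 1) - Y k)⁻¹ * (p N - Y k))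
              * ∏ j ∈ F, ((Y (k + 1) - Y j)⁻¹ * (p N - Y j)))
          = (((Y k - Y (k + 1))⁻¹ * (p N - Y (k + 1))) * ((Y (k + 1) - Y k)⁻¹ * (p N - Y k)))
            * ((∏ j ∈ F, ((Y k - Y j)⁻¹ * (p N - Y j)))
              * (∏ j ∈ F, ((Y (k + 1) - Y j)⁻¹ * (p N - Y j)))) := by
        ring
      linarith [he, hcomb]
    have e1 := hkey k hkmem
    have e2 := hkey (k + 1) hk1mem
    have hlamk := hlam k hkmem
    have hlamk1 := hlam (k + 1) hk1mem
    have hcne : w N * Q.eval (p N) ≠ 0 := mul_ne_zero (ne_of_gt hwNpos) hQp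
    have hmul : (lam k * lam (k + 1)) * (Q.eval (Y k) * Q.eval (Y (k + 1)))
        = (w N * Q.eval (p N)) * (w N * Q.eval (p N))
          * ((L k).eval (p N) * (L (k + 1)).eval (p N)) := by
      calc (lam k * lam (k + 1)) * (Q.eval (Y k) * Q.eval (Y (k + 1)))
          = (lam k * Q.eval (Y k)) * (lam (k + 1) * Q.eval (Y (k + 1))) := by ring
        _ = (-(w N * Q.eval (p N)) * (L k).eval (p N))
            * (-(w N * Q.eval (p N)) * (L (k + 1)).eval (p N)) := by rw [e1, e2]
        _ = _ := by ring
    have hQQ : Q.eval (Y k) * Q.eval (Y (k + 1)) < 0 := by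
      have hrhs : (w N * Q.eval (p N)) * (w N * Q.eval (p N))
          * ((L k).eval (p N) * (L (k + 1)).eval (p N)) < 0 :=
        mul_neg_of_pos_of_neg (mul_self_pos.mpr hcne) hEneg
      nlinarith [mul_pos hlamk hlamk1, hmul, hrhs]
    exact aux_ivt Q (Y k) (Y (k + 1)) hkk hQQ
  · -- Part (iii)
    intro hPN k hk1 hk2 hIoo
    obtain ⟨hl, hr⟩ := hIoo
    have hQp := hQpN hPN
    have hYne : ∀ j, 1 ≤ j → j ≤ n → p N ≠ Y j := fun j h1 h2 h =>
      hPN (by rw [h]; exact hYroot j h1 h2)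
    have hkmem : k ∈ s0 := by rw [hs0, Finset.mem_Icc]; omega
    have hk1mem : k + 1 ∈ s0 := by rw [hs0, Finset.mem_Icc]; omega
    have hEk : 0 < ∏ j ∈ s0.erase k, ((Y k - Y j)⁻¹ * (p N - Y j)) := by
      refine Finset.prod_pos ?_
      intro j hj
      rw [hs0, Finset.mem_erase, Finset.mem_Icc] at hj
      obtain ⟨hjk, hj1, hjn⟩ := hj
      rcases Nat.lt_or_ge j k with h | h
      · have ha : 0 < Y k - Y j := sub_pos.mpr (hYmono j k hj1 h (by omega))
        have hb : 0 < p N - Y j := by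
          have := hYmono j k hj1 h (by omega)
          linarith
        exact mul_pos (inv_pos.mpr ha) hb
      · have hjge : k + 1 ≤ j := by omega
        have hYj : Y (k + 1) ≤ Y j := by
          rcases Nat.lt_or_ge (k + 1) j with h' | h'
          · exact le_of_lt (hYmono (k + 1) j (by omega) h' hjn)
          · have hj' : j = k + 1 := by omega
            rw [hj']
        have ha : Y k - Y j < 0 := by
          have := hYmono k j hk1 (by omega) hjn
          linarith
        have hb : p N - Y j < 0 := by linarith
        exact mul_pos_of_neg_of_neg (inv_lt_zero.mpr ha) hb
    have hEk1 : 0 < ∏ j ∈ s0.erase (k + 1), ((Y (k + 1) - Y j)⁻¹ * (p N - Y j)) := by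
      refine Finset.prod_pos ?_
      intro j hj
      rw [hs0, Finset.mem_erase, Finset.mem_Icc] at hj
      obtain ⟨hjk, hj1, hjn⟩ := hj
      rcases Nat.lt_or_ge j (k + 1) with h | h
      · have hYj : Y j ≤ Y k := by
          rcases Nat.lt_or_ge j k with h' | h'
          · exact le_of_lt (hYmono j k hj1 h' (by omega))
          · have hj' : j = k := by omega
            rw [hj']
        have ha : 0 < Y (k + 1) - Y j := sub_pos.mpr (hYmono j (k + 1) hj1 h hk2)
        have hb : 0 < p N - Y j := by linarith
        exact mul_pos (inv_pos.mpr ha) hb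
      · have h' : k + 1 < j := by omega
        have hx := hYmono (k + 1) j (by omega) h' hjn
        have ha : Y (k + 1) - Y j < 0 := by linarith
        have hb : p N - Y j < 0 := by linarith
        exact mul_pos_of_neg_of_neg (inv_lt_zero.mpr ha) hb
    have hQsq : 0 < Q.eval (p N) * Q.eval (p N) := mul_self_pos.mpr hQp
    constructor
    · have e1 := hkey k hkmem
      have hlamk := hlam k hkmem
      have hEq : lam k * (Q.eval (Y k) * Q.eval (p N))
          = -(w N * (Q.eval (p N) * Q.eval (p N))
              * ∏ j ∈ s0.erase k, ((Y k - Y j)⁻¹ * (p N - Y j))) := by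
        calc lam k * (Q.eval (Y k) * Q.eval (p N))
            = (lam k * Q.eval (Y k)) * Q.eval (p N) := by ring
          _ = (-(w N * Q.eval (p N)) * (L k).eval (p N)) * Q.eval (p N) := by rw [e1]
          _ = _ := by rw [hLeval k]; ring
      have hneg : Q.eval (Y k) * Q.eval (p N) < 0 := by
        nlinarith [hEq, hlamk, mul_pos (mul_pos hwNpos hQsq) hEk]
      exact aux_ivt Q (Y k) (p N) hl hneg
    · have e2 := hkey (k + 1) hk1mem
      have hlamk1 := hlam (k + 1) hk1mem
      have hEq : lam (k + 1) * (Q.eval (p N) * Q.eval (Y (k + 1)))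
          = -(w N * (Q.eval (p N) * Q.eval (p N))
              * ∏ j ∈ s0.erase (k + 1), ((Y (k + 1) - Y j)⁻¹ * (p N - Y j))) := by
        calc lam (k + 1) * (Q.eval (p N) * Q.eval (Y (k + 1)))
            = (lam (k + 1) * Q.eval (Y (k + 1))) * Q.eval (p N) := by ring
          _ = (-(w N * Q.eval (p N)) * (L (k + 1)).eval (p N)) * Q.eval (p N) := by rw [e2]
          _ = _ := by rw [hLeval (k + 1)]; ring
      have hneg : Q.eval (p N) * Q.eval (Y (k + 1)) < 0 := by
        nlinarith [hEq, hlamk1, mul_pos (mul_pos hwNpos hQsq) hEk1]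
      exact aux_ivt Q (p N) (Y (k + 1)) hr hneg
end

section
/- Let p_0, p_1, ..., p_N be real numbers with either p_0 < p_1 < ⋯ < p_N or p_0 > p_1 > ⋯ > p_N, and let w_0, ..., w_N be positive weights. Let P_n(·;N) be a degree-n polynomial (1 ≤ n ≤ N-1) orthogonal to all polynomials of degree < n with respect to ⟨f,g⟩_N = Σ_{s=0}^{N-1} w_s f(p_s) g(p_s), and let P_n(·;N+1) be a degree-n polynomial orthogonal to all polynomials of degree < n with respect to ⟨f,g⟩_{N+1} = Σ_{s=0}^{N} w_s f(p_s) g(p_s). Let Y_1 < Y_2 < ⋯ < Y_n be the zeros of P_n(·;N) and set Y_0 = Y_{n+1} = p_N. If the points are strictly increasing, then P_n(·;N+1) has a zero in each interval (Y_k, Y_{k+1}) for every k ∈ {1, ..., n}; if the points are strictly decreasing, then P_n(·;N+1) has a zero in each interval (Y_k, Y_{k+1}) for every k ∈ {0, ..., n-1}. -/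
open Polynomial Finset

private lemma vanish (R : Polynomial ℝ) (s : Finset ℕ) (x : ℕ → ℝ)
    (hinj : Set.InjOn x s) (hdeg : R.natDegree < s.card)
    (hev : ∀ i ∈ s, R.eval (x i) = 0) : R = 0 := by
  apply Polynomial.eq_zero_of_natDegree_lt_card_of_eval_eq_zero' R (s.image x)
  · intro y hy
    obtain ⟨i, hi, rfl⟩ := Finset.mem_image.mp hy
    exact hev i hi
  · rwa [Finset.card_image_of_injOn hinj]

private lemma ivt_zero (Q : Polynomial ℝ) (a b : ℝ) (hab : a < b)
    (h : Q.eval a * Q.eval b < 0) : ∃ y ∈ Set.Ioo a b, Q.eval y = 0 := by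
  have hc : ContinuousOn (fun x => Q.eval x) (Set.Icc a b) :=
    (Polynomial.continuous Q).continuousOn
  rcases mul_neg_iff.mp h with ⟨ha, hb⟩ | ⟨ha, hb⟩
  · have := intermediate_value_Ioo' (le_of_lt hab) hc (Set.mem_Ioo.mpr ⟨hb, ha⟩)
    obtain ⟨y, hy, hQy⟩ := this
    exact ⟨y, hy, hQy⟩
  · have := intermediate_value_Ioo (le_of_lt hab) hc (Set.mem_Ioo.mpr ⟨ha, hb⟩)
    obtain ⟨y, hy, hQy⟩ := this
    exact ⟨y, hy, hQy⟩

private lemma pairprod (n k : ℕ) (hk1 : 1 ≤ k) (hk : k + 1 ≤ n) (Y : ℕ → ℝ) (u v : ℝ) :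
    (∏ i ∈ (Finset.Icc 1 n).erase k, (u - Y i)) *
      (∏ i ∈ (Finset.Icc 1 n).erase (k+1), (v - Y i))
    = ((u - Y (k+1)) * (v - Y k)) *
      ∏ i ∈ ((Finset.Icc 1 n).erase k).erase (k+1), ((u - Y i) * (v - Y i)) := by
  have hkm : k ∈ Finset.Icc 1 n := by simp; omega
  have hk1m : k + 1 ∈ Finset.Icc 1 n := by simp; omega
  have h1 : k + 1 ∈ (Finset.Icc 1 n).erase k := by
    refine Finset.mem_erase.mpr ⟨by omega, hk1m⟩
  have h2 : k ∈ (Finset.Icc 1 n).erase (k+1) := by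
    refine Finset.mem_erase.mpr ⟨by omega, hkm⟩
  rw [← Finset.mul_prod_erase _ _ h1, ← Finset.mul_prod_erase _ _ h2]
  have hcomm : ((Finset.Icc 1 n).erase (k+1)).erase k
      = ((Finset.Icc 1 n).erase k).erase (k+1) := by
    ext i; simp only [Finset.mem_erase]; tauto
  rw [hcomm, Finset.prod_mul_distrib]
  ring

private lemma core (N n : ℕ) (hn : 1 ≤ n) (hnN : n + 1 ≤ N)
    (p : ℕ → ℝ)
    (hpmono : (∀ i j, i < j → j ≤ N → p i < p j) ∨ (∀ i j, i < j → j ≤ N → p j < p i))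
    (w : ℕ → ℝ) (hw : ∀ s ≤ N, 0 < w s)
    (P Q : Polynomial ℝ)
    (hPdeg : P.natDegree = n)
    (hPorth : ∀ f : Polynomial ℝ, f.natDegree < n →
      ∑ s ∈ Finset.range N, w s * P.eval (p s) * f.eval (p s) = 0)
    (hQdeg : Q.natDegree = n)
    (hQorth : ∀ f : Polynomial ℝ, f.natDegree < n →
      ∑ s ∈ Finset.range (N + 1), w s * Q.eval (p s) * f.eval (p s) = 0)
    (Y : ℕ → ℝ)
    (hYmono : ∀ i j, 1 ≤ i → i < j → j ≤ n → Y i < Y j)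
    (hYroot : ∀ i, 1 ≤ i → i ≤ n → P.eval (Y i) = 0) :
    Q.eval (p N) ≠ 0 ∧
    (∀ k, 1 ≤ k → k ≤ n → ∃ m : ℝ, 0 < m ∧
      Q.eval (Y k) * m = -(w N * Q.eval (p N)
        * (∏ i ∈ (Finset.Icc 1 n).erase k, (p N - Y i))
        * (∏ i ∈ (Finset.Icc 1 n).erase k, (Y k - Y i)))) ∧
    (∃ s, s < N ∧ Y n < p s) ∧ (∃ s, s < N ∧ p s < Y 1) := by
  -- distinctness of support points
  have hpne : ∀ i j, i ≤ N → j ≤ N → i ≠ j → p i ≠ p j := by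
    intro i j hi hj hij
    rcases Nat.lt_or_ge i j with h | h
    · rcases hpmono with hm | hm
      · exact ne_of_lt (hm i j h hj)
      · exact ne_of_gt (hm i j h hj)
    · have h' : j < i := by omega
      rcases hpmono with hm | hm
      · exact ne_of_gt (hm j i h' hi)
      · exact ne_of_lt (hm j i h' hi)
  have hpinj : Set.InjOn p (Finset.range N : Finset ℕ) := by
    intro i hi j hj hij
    by_contra hne
    exact hpne i j (by simp at hi; omega) (by simp at hj; omega) hne hij
  have hYinj : Set.InjOn Y (Finset.Icc 1 n : Finset ℕ) := by
    intro i hi j hj hij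
    simp only [Finset.coe_Icc, Set.mem_Icc] at hi hj
    by_contra hne
    rcases Nat.lt_or_ge i j with h | h
    · exact absurd hij (ne_of_lt (hYmono i j hi.1 h hj.2))
    · exact absurd hij (ne_of_gt (hYmono j i hj.1 (by omega) hi.2))
  have hcardI : (Finset.Icc 1 n).card = n := by simp
  -- the monic polynomial with roots Y
  set M : Polynomial ℝ := ∏ i ∈ Finset.Icc 1 n, (X - C (Y i)) with hM
  have hMmonic : M.Monic := monic_prod_of_monic _ _ fun i _ => monic_X_sub_C _
  have hMdeg : M.natDegree = n := by
    rw [hM, Polynomial.natDegree_prod _ _ fun i _ => X_sub_C_ne_zero _]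
    simp
  have hMeval : ∀ x : ℝ, M.eval x = ∏ i ∈ Finset.Icc 1 n, (x - Y i) := by
    intro x; rw [hM]; simp [Polynomial.eval_prod]
  have hMrootY : ∀ i ∈ Finset.Icc 1 n, M.eval (Y i) = 0 := by
    intro i hi
    rw [hMeval]
    exact Finset.prod_eq_zero hi (by ring)
  have hPne : P ≠ 0 := by
    intro h; rw [h] at hPdeg; simp at hPdeg; omega
  have hQne : Q ≠ 0 := by
    intro h; rw [h] at hQdeg; simp at hQdeg; omega
  set a := P.leadingCoeff with haa
  have ha : a ≠ 0 := Polynomial.leadingCoeff_ne_zero.mpr hPne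
  -- P = C a * M
  have hPM : P = C a * M := by
    have hR0 : P - C a * M = 0 := by
      by_cases hR : P - C a * M = 0
      · exact hR
      · refine vanish _ (Finset.Icc 1 n) Y hYinj ?_ ?_
        · rw [hcardI]
          have hle : (P - C a * M).natDegree ≤ n := by
            refine le_trans (Polynomial.natDegree_sub_le _ _) ?_
            simp only [max_le_iff]
            exact ⟨le_of_eq hPdeg, le_trans (Polynomial.natDegree_C_mul_le _ _) (le_of_eq hMdeg)⟩
          have hcoeff : (P - C a * M).coeff n = 0 := by
            rw [Polynomial.coeff_sub, Polynomial.coeff_C_mul]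
            rw [← hPdeg]
            rw [Polynomial.coeff_natDegree, ← haa]
            rw [hPdeg, ← hMdeg, hMmonic.coeff_natDegree]
            ring
          rcases lt_or_eq_of_le hle with h | h
          · exact h
          · exfalso
            apply hR
            have := Polynomial.leadingCoeff_ne_zero.mpr hR
            rw [Polynomial.leadingCoeff, h, hcoeff] at this
            exact absurd rfl this
        · intro i hi
          simp only [Finset.mem_Icc] at hi
          rw [Polynomial.eval_sub, Polynomial.eval_mul, Polynomial.eval_C,
            hYroot i hi.1 hi.2, hMrootY i (by simp [Finset.mem_Icc]; omega)]
          ring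
    exact sub_eq_zero.mp hR0
  -- orthogonality for M
  have hMorth : ∀ f : Polynomial ℝ, f.natDegree < n →
      ∑ s ∈ Finset.range N, w s * M.eval (p s) * f.eval (p s) = 0 := by
    intro f hf
    have h1 := hPorth f hf
    rw [hPM] at h1
    simp only [Polynomial.eval_mul, Polynomial.eval_C] at h1
    have h2 : ∑ s ∈ Finset.range N, w s * (a * M.eval (p s)) * f.eval (p s)
        = a * ∑ s ∈ Finset.range N, w s * M.eval (p s) * f.eval (p s) := by
      rw [Finset.mul_sum]
      exact Finset.sum_congr rfl fun s _ => by ring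
    rw [h2] at h1
    rcases mul_eq_zero.mp h1 with h | h
    · exact absurd h ha
    · exact h
  -- auxiliary: extremal point lemma
  have hbeyond : ∀ k, 1 ≤ k → k ≤ n →
      (∀ s, s < N → (p s - Y k) * (∏ i ∈ (Finset.Icc 1 n).erase k, (p s - Y i))^2 ≤ 0) ∨
      (∀ s, s < N → 0 ≤ (p s - Y k) * (∏ i ∈ (Finset.Icc 1 n).erase k, (p s - Y i))^2) →
      False := by
    intro k hk1 hkn hsign
    have hkmem : k ∈ Finset.Icc 1 n := by simp [Finset.mem_Icc]; omega
    set fk : Polynomial ℝ := ∏ i ∈ (Finset.Icc 1 n).erase k, (X - C (Y i)) with hfk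
    have hfkdeg : fk.natDegree = n - 1 := by
      rw [hfk, Polynomial.natDegree_prod _ _ fun i _ => X_sub_C_ne_zero _]
      simp [Finset.card_erase_of_mem hkmem]
    have hfkeval : ∀ x : ℝ, fk.eval x = ∏ i ∈ (Finset.Icc 1 n).erase k, (x - Y i) := by
      intro x; rw [hfk]; simp [Polynomial.eval_prod]
    have hMfac : ∀ x : ℝ, M.eval x = (x - Y k) * fk.eval x := by
      intro x
      rw [hMeval, hfkeval, ← Finset.mul_prod_erase _ _ hkmem]
    have horth := hMorth fk (by omega)
    have hterm : ∀ s ∈ Finset.range N, w s * M.eval (p s) * fk.eval (p s)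
        = w s * ((p s - Y k) * (∏ i ∈ (Finset.Icc 1 n).erase k, (p s - Y i))^2) := by
      intro s hs
      rw [hMfac, hfkeval]
      ring
    rw [Finset.sum_congr rfl hterm] at horth
    -- each term has the same (weak) sign and sums to zero, so all vanish
    have hallzero : ∀ s, s < N →
        (p s - Y k) * (∏ i ∈ (Finset.Icc 1 n).erase k, (p s - Y i))^2 = 0 := by
      rcases hsign with hneg | hpos
      · have h0 : ∀ s ∈ Finset.range N,
            0 ≤ -(w s * ((p s - Y k) * (∏ i ∈ (Finset.Icc 1 n).erase k, (p s - Y i))^2)) := by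
          intro s hs
          simp only [Finset.mem_range] at hs
          have := hneg s hs
          have hws := hw s (by omega)
          nlinarith
        have hsum0 : ∑ s ∈ Finset.range N,
            -(w s * ((p s - Y k) * (∏ i ∈ (Finset.Icc 1 n).erase k, (p s - Y i))^2)) = 0 := by
          rw [Finset.sum_neg_distrib, horth, neg_zero]
        have := (Finset.sum_eq_zero_iff_of_nonneg h0).mp hsum0
        intro s hs
        have h1 := this s (Finset.mem_range.mpr hs)
        have hws := hw s (by omega)
        have h2 : w s * ((p s - Y k) * (∏ i ∈ (Finset.Icc 1 n).erase k, (p s - Y i))^2) = 0 := by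
          linarith
        rcases mul_eq_zero.mp h2 with h | h
        · exact absurd h (ne_of_gt hws)
        · exact h
      · have h0 : ∀ s ∈ Finset.range N,
            0 ≤ w s * ((p s - Y k) * (∏ i ∈ (Finset.Icc 1 n).erase k, (p s - Y i))^2) := by
          intro s hs
          simp only [Finset.mem_range] at hs
          have := hpos s hs
          have hws := hw s (by omega)
          nlinarith
        have := (Finset.sum_eq_zero_iff_of_nonneg h0).mp horth
        intro s hs
        have h1 := this s (Finset.mem_range.mpr hs)
        have hws := hw s (by omega)
        rcases mul_eq_zero.mp h1 with h | h
        · exact absurd h (ne_of_gt hws)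
        · exact h
    -- hence M vanishes at all N support points, contradiction
    have hMzero : M = 0 := by
      refine vanish M (Finset.range N) p hpinj (by simp; omega) ?_
      intro s hs
      simp only [Finset.mem_range] at hs
      have h1 := hallzero s hs
      rw [hMfac, hfkeval]
      rcases mul_eq_zero.mp h1 with h | h
      · rw [h]; ring
      · have : (∏ i ∈ (Finset.Icc 1 n).erase k, (p s - Y i)) = 0 := by
          nlinarith [sq_nonneg (∏ i ∈ (Finset.Icc 1 n).erase k, (p s - Y i))]
        rw [this]; ring
    exact hMmonic.ne_zero hMzero
  -- C3 and C4
  have hC3 : ∃ s, s < N ∧ Y n < p s := by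
    by_contra hc
    push_neg at hc
    refine hbeyond n hn le_rfl (Or.inl ?_)
    intro s hs
    have := hc s hs
    nlinarith [sq_nonneg (∏ i ∈ (Finset.Icc 1 n).erase n, (p s - Y i))]
  have hC4 : ∃ s, s < N ∧ p s < Y 1 := by
    by_contra hc
    push_neg at hc
    refine hbeyond 1 le_rfl hn (Or.inr ?_)
    intro s hs
    have := hc s hs
    nlinarith [sq_nonneg (∏ i ∈ (Finset.Icc 1 n).erase 1, (p s - Y i))]
  -- p N is not a root of M (nor P)
  have htY : ∀ i, 1 ≤ i → i ≤ n → Y i ≠ p N := by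
    intro i hi1 hin
    rcases hpmono with hm | hm
    · obtain ⟨s, hs, hsY⟩ := hC3
      have h1 : Y i ≤ Y n := by
        rcases lt_or_eq_of_le hin with h | h
        · exact le_of_lt (hYmono i n hi1 h le_rfl)
        · rw [h]
      have h2 : p s < p N := hm s N hs le_rfl
      exact ne_of_lt (by linarith)
    · obtain ⟨s, hs, hsY⟩ := hC4
      have h1 : Y 1 ≤ Y i := by
        rcases lt_or_eq_of_le hi1 with h | h
        · exact le_of_lt (hYmono 1 i le_rfl h hin)
        · rw [← h]
      have h2 : p N < p s := hm s N hs le_rfl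
      exact ne_of_gt (by linarith)
  have hMt : M.eval (p N) ≠ 0 := by
    rw [hMeval]
    refine Finset.prod_ne_zero_iff.mpr ?_
    intro i hi
    simp only [Finset.mem_Icc] at hi
    have := htY i hi.1 hi.2
    intro h
    exact this (by linarith)
  have hPt : P.eval (p N) ≠ 0 := by
    rw [hPM, Polynomial.eval_mul, Polynomial.eval_C]
    exact mul_ne_zero ha hMt
  -- C1 : Q.eval (p N) ≠ 0
  have hC1 : Q.eval (p N) ≠ 0 := by
    intro hQt
    have hQmu : ∀ f : Polynomial ℝ, f.natDegree < n →
        ∑ s ∈ Finset.range N, w s * Q.eval (p s) * f.eval (p s) = 0 := by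
      intro f hf
      have := hQorth f hf
      rw [Finset.sum_range_succ, hQt] at this
      simpa using this
    set b := Q.leadingCoeff with hbb
    have hb : b ≠ 0 := Polynomial.leadingCoeff_ne_zero.mpr hQne
    set R : Polynomial ℝ := C a * Q - C b * P with hRdef
    by_cases hR0 : R = 0
    · have : a * Q.eval (p N) = b * P.eval (p N) := by
        have h1 : R.eval (p N) = 0 := by rw [hR0]; simp
        rw [hRdef] at h1
        simp only [Polynomial.eval_sub, Polynomial.eval_mul, Polynomial.eval_C] at h1
        linarith
      rw [hQt, mul_zero] at this
      exact mul_ne_zero hb hPt this.symm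
    · have hRdeg : R.natDegree < n := by
        have hle : R.natDegree ≤ n := by
          refine le_trans (Polynomial.natDegree_sub_le _ _) ?_
          simp only [max_le_iff]
          exact ⟨le_trans (Polynomial.natDegree_C_mul_le _ _) (le_of_eq hQdeg),
            le_trans (Polynomial.natDegree_C_mul_le _ _) (le_of_eq hPdeg)⟩
        have hcoeff : R.coeff n = 0 := by
          rw [hRdef, Polynomial.coeff_sub, Polynomial.coeff_C_mul, Polynomial.coeff_C_mul]
          rw [← hQdeg, Polynomial.coeff_natDegree, hQdeg, ← hPdeg, Polynomial.coeff_natDegree]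
          rw [← hbb, ← haa]; ring
        rcases lt_or_eq_of_le hle with h | h
        · exact h
        · exfalso
          have := Polynomial.leadingCoeff_ne_zero.mpr hR0
          rw [Polynomial.leadingCoeff, h, hcoeff] at this
          exact absurd rfl this
      have hsum : ∑ s ∈ Finset.range N, w s * R.eval (p s) * R.eval (p s) = 0 := by
        have h1 := hQmu R hRdeg
        have h2 := hPorth R hRdeg
        have h3 : ∀ s ∈ Finset.range N, w s * R.eval (p s) * R.eval (p s)
            = a * (w s * Q.eval (p s) * R.eval (p s)) - b * (w s * P.eval (p s) * R.eval (p s)) := by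
          intro s hs
          have : R.eval (p s) = a * Q.eval (p s) - b * P.eval (p s) := by
            rw [hRdef]; simp
          rw [this]; ring
        rw [Finset.sum_congr rfl h3, Finset.sum_sub_distrib, ← Finset.mul_sum, ← Finset.mul_sum,
          h1, h2]
        ring
      have hRzero : R = 0 := by
        refine vanish R (Finset.range N) p hpinj (by simp; omega) ?_
        have h0 : ∀ s ∈ Finset.range N, 0 ≤ w s * R.eval (p s) * R.eval (p s) := by
          intro s hs
          simp only [Finset.mem_range] at hs
          have hws := hw s (by omega)
          nlinarith [sq_nonneg (R.eval (p s))]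
        have := (Finset.sum_eq_zero_iff_of_nonneg h0).mp hsum
        intro s hs
        have h1 := this s hs
        simp only [Finset.mem_range] at hs
        have hws := hw s (by omega)
        rcases mul_eq_zero.mp h1 with h | h
        · rcases mul_eq_zero.mp h with h' | h'
          · exact absurd h' (ne_of_gt hws)
          · exact h'
        · exact h
      exact hR0 hRzero
  -- C2 : the key identity
  refine ⟨hC1, ?_, hC3, hC4⟩
  intro k hk1 hkn
  have hkmem : k ∈ Finset.Icc 1 n := by simp [Finset.mem_Icc]; omega
  set fk : Polynomial ℝ := ∏ i ∈ (Finset.Icc 1 n).erase k, (X - C (Y i)) with hfk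
  have hfkmonic : fk.Monic := monic_prod_of_monic _ _ fun i _ => monic_X_sub_C _
  have hfkdeg : fk.natDegree = n - 1 := by
    rw [hfk, Polynomial.natDegree_prod _ _ fun i _ => X_sub_C_ne_zero _]
    simp [Finset.card_erase_of_mem hkmem]
  have hfkdeg' : fk.natDegree < n := by omega
  have hfkeval : ∀ x : ℝ, fk.eval x = ∏ i ∈ (Finset.Icc 1 n).erase k, (x - Y i) := by
    intro x; rw [hfk]; simp [Polynomial.eval_prod]
  have hfkY : ∀ j ∈ Finset.Icc 1 n, j ≠ k → fk.eval (Y j) = 0 := by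
    intro j hj hjk
    rw [hfkeval]
    exact Finset.prod_eq_zero (Finset.mem_erase.mpr ⟨hjk, hj⟩) (by ring)
  -- the Christoffel-type weight
  set m : ℝ := ∑ s ∈ Finset.range N, w s * (fk.eval (p s))^2 with hm
  have hmpos : 0 < m := by
    have h0 : ∀ s ∈ Finset.range N, 0 ≤ w s * (fk.eval (p s))^2 := by
      intro s hs
      simp only [Finset.mem_range] at hs
      have hws := hw s (by omega)
      positivity
    have hex : ∃ s ∈ Finset.range N, 0 < w s * (fk.eval (p s))^2 := by
      by_contra hc
      push_neg at hc
      have hallz : ∀ s ∈ Finset.range N, fk.eval (p s) = 0 := by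
        intro s hs
        have h1 := hc s hs
        have h2 := h0 s hs
        simp only [Finset.mem_range] at hs
        have hws := hw s (by omega)
        have : w s * (fk.eval (p s))^2 = 0 := le_antisymm h1 h2
        rcases mul_eq_zero.mp this with h | h
        · exact absurd h (ne_of_gt hws)
        · exact pow_eq_zero_iff (by norm_num) |>.mp h
      have : fk = 0 := vanish fk (Finset.range N) p hpinj (by simp; omega) hallz
      exact hfkmonic.ne_zero this
    exact Finset.sum_pos' h0 hex
  refine ⟨m, hmpos, ?_⟩
  -- step 1
  have hstep1 : ∑ s ∈ Finset.range N, w s * Q.eval (p s) * fk.eval (p s)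
      = -(w N * Q.eval (p N) * fk.eval (p N)) := by
    have := hQorth fk hfkdeg'
    rw [Finset.sum_range_succ] at this
    linarith
  -- step 2 : quadrature
  set g : Polynomial ℝ := C (fk.eval (Y k)) * (Q * fk) - C (Q.eval (Y k)) * (fk * fk) with hg
  have hgY : ∀ j ∈ Finset.Icc 1 n, g.eval (Y j) = 0 := by
    intro j hj
    rw [hg]
    simp only [Polynomial.eval_sub, Polynomial.eval_mul, Polynomial.eval_C]
    by_cases hjk : j = k
    · subst hjk; ring
    · rw [hfkY j hj hjk]; ring
  have hgdeg : g.natDegree ≤ 2 * n - 1 := by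
    refine le_trans (Polynomial.natDegree_sub_le _ _) ?_
    simp only [max_le_iff]
    constructor
    · refine le_trans (Polynomial.natDegree_C_mul_le _ _) ?_
      refine le_trans (Polynomial.natDegree_mul_le) ?_
      omega
    · refine le_trans (Polynomial.natDegree_C_mul_le _ _) ?_
      refine le_trans (Polynomial.natDegree_mul_le) ?_
      omega
  have hr0 : g %ₘ M = 0 := by
    by_cases hr : g %ₘ M = 0
    · exact hr
    · refine vanish _ (Finset.Icc 1 n) Y hYinj ?_ ?_
      · rw [hcardI, ← hMdeg]
        exact Polynomial.natDegree_lt_natDegree hr (Polynomial.degree_modByMonic_lt g hMmonic)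
      · intro j hj
        have hdiv := Polynomial.modByMonic_add_div g M
        have : g.eval (Y j) = (g %ₘ M).eval (Y j) + M.eval (Y j) * (g /ₘ M).eval (Y j) := by
          conv_lhs => rw [← hdiv]
          simp [Polynomial.eval_add, Polynomial.eval_mul]
        rw [hgY j hj, hMrootY j hj] at this
        linarith
  have hgMh : g = M * (g /ₘ M) := by
    have hdiv := Polynomial.modByMonic_add_div g M
    rw [hr0, zero_add] at hdiv
    exact hdiv.symm
  have hhdeg : (g /ₘ M).natDegree < n := by
    rw [Polynomial.natDegree_divByMonic g hMmonic, hMdeg]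
    omega
  have hquad := hMorth (g /ₘ M) hhdeg
  have hterm : ∀ s ∈ Finset.range N, w s * M.eval (p s) * (g /ₘ M).eval (p s)
      = fk.eval (Y k) * (w s * Q.eval (p s) * fk.eval (p s))
        - Q.eval (Y k) * (w s * (fk.eval (p s))^2) := by
    intro s hs
    have h1 : M.eval (p s) * (g /ₘ M).eval (p s) = g.eval (p s) := by
      conv_rhs => rw [hgMh]
      simp [Polynomial.eval_mul]
    have h2 : g.eval (p s) = fk.eval (Y k) * (Q.eval (p s) * fk.eval (p s))
        - Q.eval (Y k) * (fk.eval (p s))^2 := by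
      rw [hg]
      simp only [Polynomial.eval_sub, Polynomial.eval_mul, Polynomial.eval_C]
      ring
    calc w s * M.eval (p s) * (g /ₘ M).eval (p s)
        = w s * (M.eval (p s) * (g /ₘ M).eval (p s)) := by ring
      _ = w s * g.eval (p s) := by rw [h1]
      _ = _ := by rw [h2]; ring
  rw [Finset.sum_congr rfl hterm, Finset.sum_sub_distrib, ← Finset.mul_sum, ← Finset.mul_sum]
    at hquad
  rw [hstep1] at hquad
  -- conclude
  have hfinal : Q.eval (Y k) * m
      = -(w N * Q.eval (p N) * fk.eval (p N) * fk.eval (Y k)) := by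
    rw [hm]
    linarith
  rw [hfinal, hfkeval, hfkeval]

private lemma middle_neg (n k : ℕ) (hk1 : 1 ≤ k) (hk : k + 1 ≤ n) (Y : ℕ → ℝ) (t : ℝ)
    (hYmono : ∀ i j, 1 ≤ i → i < j → j ≤ n → Y i < Y j)
    (hside : (∀ i, 1 ≤ i → i ≤ n → Y i < t) ∨ (∀ i, 1 ≤ i → i ≤ n → t < Y i))
    (W m1 m2 q1 q2 : ℝ) (hW : W ≠ 0) (hm1 : 0 < m1) (hm2 : 0 < m2)
    (hkey1 : q1 * m1 = -(W * (∏ i ∈ (Finset.Icc 1 n).erase k, (t - Y i))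
      * (∏ i ∈ (Finset.Icc 1 n).erase k, (Y k - Y i))))
    (hkey2 : q2 * m2 = -(W * (∏ i ∈ (Finset.Icc 1 n).erase (k+1), (t - Y i))
      * (∏ i ∈ (Finset.Icc 1 n).erase (k+1), (Y (k+1) - Y i)))) :
    q1 * q2 < 0 := by
  set A1 := ∏ i ∈ (Finset.Icc 1 n).erase k, (t - Y i) with hA1
  set A2 := ∏ i ∈ (Finset.Icc 1 n).erase (k+1), (t - Y i) with hA2
  set B1 := ∏ i ∈ (Finset.Icc 1 n).erase k, (Y k - Y i) with hB1
  set B2 := ∏ i ∈ (Finset.Icc 1 n).erase (k+1), (Y (k+1) - Y i) with hB2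
  have hmemD : ∀ i ∈ ((Finset.Icc 1 n).erase k).erase (k+1),
      1 ≤ i ∧ i ≤ n ∧ i ≠ k ∧ i ≠ k + 1 := by
    intro i hi
    simp only [Finset.mem_erase, Finset.mem_Icc] at hi
    exact ⟨hi.2.2.1, hi.2.2.2, hi.2.1, hi.1⟩
  have hA : 0 < A1 * A2 := by
    rw [hA1, hA2, pairprod n k hk1 hk Y t t]
    have hfirst : 0 < (t - Y (k+1)) * (t - Y k) := by
      rcases hside with hs | hs
      · exact mul_pos (by linarith [hs (k+1) (by omega) hk])
          (by linarith [hs k hk1 (by omega)])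
      · exact mul_pos_of_neg_of_neg (by linarith [hs (k+1) (by omega) hk])
          (by linarith [hs k hk1 (by omega)])
    refine mul_pos hfirst (Finset.prod_pos ?_)
    intro i hi
    obtain ⟨h1, h2, _, _⟩ := hmemD i hi
    have : t - Y i ≠ 0 := by
      rcases hside with hs | hs
      · have := hs i h1 h2; intro h; linarith
      · have := hs i h1 h2; intro h; linarith
    exact mul_self_pos.mpr this
  have hB : B1 * B2 < 0 := by
    rw [hB1, hB2, pairprod n k hk1 hk Y (Y k) (Y (k+1))]
    have hd : Y k < Y (k+1) := hYmono k (k+1) hk1 (by omega) hk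
    have hfirst : (Y k - Y (k+1)) * (Y (k+1) - Y k) < 0 :=
      mul_neg_of_neg_of_pos (by linarith) (by linarith)
    refine mul_neg_of_neg_of_pos hfirst (Finset.prod_pos ?_)
    intro i hi
    obtain ⟨h1, h2, h3, h4⟩ := hmemD i hi
    rcases Nat.lt_or_ge i k with h | h
    · have e1 : Y i < Y k := hYmono i k h1 h (by omega)
      have e2 : Y i < Y (k+1) := hYmono i (k+1) h1 (by omega) hk
      exact mul_pos (by linarith) (by linarith)
    · have h' : k + 1 < i := by omega
      have e1 : Y k < Y i := hYmono k i hk1 (by omega) h2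
      have e2 : Y (k+1) < Y i := hYmono (k+1) i (by omega) h' h2
      exact mul_pos_of_neg_of_neg (by linarith) (by linarith)
  have hprod : (q1 * m1) * (q2 * m2) = (W * W) * ((A1 * A2) * (B1 * B2)) := by
    rw [hkey1, hkey2]; ring
  have hWW : 0 < W * W := mul_self_pos.mpr hW
  have hrhs : (W * W) * ((A1 * A2) * (B1 * B2)) < 0 :=
    mul_neg_of_pos_of_neg hWW (mul_neg_of_pos_of_neg hA hB)
  nlinarith [mul_pos hm1 hm2]

/-- Interlacing of the zeros of discrete orthogonal polynomials when one
support point is added, for strictly monotone support points. Here `Y 1 < ⋯ < Y n` are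
the zeros of `P` and `Y 0 = Y (n+1) = p N`. -/
theorem stmt_1 (N n : ℕ) (hn : 1 ≤ n) (hnN : n ≤ N - 1)
    (p : ℕ → ℝ)
    (hpmono : (∀ i j, i < j → j ≤ N → p i < p j) ∨ (∀ i j, i < j → j ≤ N → p j < p i))
    (w : ℕ → ℝ) (hw : ∀ s ≤ N, 0 < w s)
    (P Q : Polynomial ℝ)
    (hPdeg : P.natDegree = n)
    (hPorth : ∀ f : Polynomial ℝ, f.natDegree < n →
      ∑ s ∈ Finset.range N, w s * P.eval (p s) * f.eval (p s) = 0)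
    (hQdeg : Q.natDegree = n)
    (hQorth : ∀ f : Polynomial ℝ, f.natDegree < n →
      ∑ s ∈ Finset.range (N + 1), w s * Q.eval (p s) * f.eval (p s) = 0)
    (Y : ℕ → ℝ)
    (hY0 : Y 0 = p N) (hYtop : Y (n + 1) = p N)
    (hYmono : ∀ i j, 1 ≤ i → i < j → j ≤ n → Y i < Y j)
    (hYroot : ∀ i, 1 ≤ i → i ≤ n → P.eval (Y i) = 0)
    (hYall : ∀ y : ℝ, P.eval y = 0 → ∃ i, 1 ≤ i ∧ i ≤ n ∧ y = Y i) :
    -- increasing case: a zero of `Q` in `(Y k, Y (k+1))` for every `k ∈ {1, …, n}`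
    ((∀ i j, i < j → j ≤ N → p i < p j) →
      ∀ k, 1 ≤ k → k ≤ n → ∃ y ∈ Set.Ioo (Y k) (Y (k + 1)), Q.eval y = 0) ∧
    -- decreasing case: a zero of `Q` in `(Y k, Y (k+1))` for every `k ∈ {0, …, n-1}`
    ((∀ i j, i < j → j ≤ N → p j < p i) →
      ∀ k, k + 1 ≤ n → ∃ y ∈ Set.Ioo (Y k) (Y (k + 1)), Q.eval y = 0) := by
  have hnN' : n + 1 ≤ N := by omega
  obtain ⟨hC1, hC2, hC3, hC4⟩ :=
    core N n hn hnN' p hpmono w hw P Q hPdeg hPorth hQdeg hQorth Y hYmono hYroot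
  have hwN : 0 < w N := hw N le_rfl
  have hW : w N * Q.eval (p N) ≠ 0 := mul_ne_zero (ne_of_gt hwN) hC1
  constructor
  · -- increasing case
    intro hinc k hk1 hkn
    have hT : ∀ i, 1 ≤ i → i ≤ n → Y i < p N := by
      obtain ⟨s, hs, hsY⟩ := hC3
      intro i hi1 hin
      have h2 : p s ≤ p N := le_of_lt (hinc s N hs le_rfl)
      rcases lt_or_eq_of_le hin with h | h
      · have := hYmono i n hi1 h le_rfl; linarith
      · rw [h]; linarith
    by_cases hkn' : k = n
    · -- edge interval (Y n, p N)
      subst hkn'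
      rw [hYtop]
      obtain ⟨m, hm, hkey⟩ := hC2 k hk1 le_rfl
      have hA : 0 < ∏ i ∈ (Finset.Icc 1 k).erase k, (p N - Y i) := by
        refine Finset.prod_pos ?_
        intro i hi
        simp only [Finset.mem_erase, Finset.mem_Icc] at hi
        have := hT i hi.2.1 hi.2.2; linarith
      have hB : 0 < ∏ i ∈ (Finset.Icc 1 k).erase k, (Y k - Y i) := by
        refine Finset.prod_pos ?_
        intro i hi
        simp only [Finset.mem_erase, Finset.mem_Icc] at hi
        have := hYmono i k hi.2.1 (by omega) le_rfl; linarith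
      have hQQ : Q.eval (Y k) * Q.eval (p N) < 0 := by
        have h1 : (Q.eval (Y k) * m) * Q.eval (p N)
            = -(w N * (Q.eval (p N) * Q.eval (p N))
              * ((∏ i ∈ (Finset.Icc 1 k).erase k, (p N - Y i))
                * (∏ i ∈ (Finset.Icc 1 k).erase k, (Y k - Y i)))) := by
          rw [hkey]; ring
        have h2 : 0 < Q.eval (p N) * Q.eval (p N) := mul_self_pos.mpr hC1
        have hneg : (Q.eval (Y k) * Q.eval (p N)) * m < 0 := by
          have e : (Q.eval (Y k) * Q.eval (p N)) * m = Q.eval (Y k) * m * Q.eval (p N) := by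
            ring
          rw [e, h1]
          have := mul_pos (mul_pos hwN h2) (mul_pos hA hB)
          linarith
        by_contra hc
        push_neg at hc
        nlinarith
      exact ivt_zero Q (Y k) (p N) (hT k hk1 le_rfl) hQQ
    · -- middle interval
      have hk2 : k + 1 ≤ n := by omega
      obtain ⟨m1, hm1, hkey1⟩ := hC2 k hk1 hkn
      obtain ⟨m2, hm2, hkey2⟩ := hC2 (k+1) (by omega) hk2
      have hQQ : Q.eval (Y k) * Q.eval (Y (k+1)) < 0 := by
        refine middle_neg n k hk1 hk2 Y (p N) hYmono (Or.inl hT)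
          (w N * Q.eval (p N)) m1 m2 _ _ hW hm1 hm2 (by rw [hkey1]; try ring)
          (by rw [hkey2]; try ring)
      exact ivt_zero Q (Y k) (Y (k+1)) (hYmono k (k+1) hk1 (by omega) hk2) hQQ
  · -- decreasing case
    intro hdec k hkn
    have htlt : p N < Y 1 := by
      obtain ⟨s, hs, hsY⟩ := hC4
      have := hdec s N hs le_rfl
      linarith
    have hT : ∀ i, 1 ≤ i → i ≤ n → p N < Y i := by
      intro i hi1 hin
      rcases lt_or_eq_of_le hi1 with h | h
      · have := hYmono 1 i le_rfl h hin; linarith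
      · rw [← h]; linarith
    by_cases hk0 : k = 0
    · -- edge interval (p N, Y 1)
      subst hk0
      rw [hY0]
      obtain ⟨m, hm, hkey⟩ := hC2 1 le_rfl hn
      have hAB : 0 < (∏ i ∈ (Finset.Icc 1 n).erase 1, (p N - Y i))
          * (∏ i ∈ (Finset.Icc 1 n).erase 1, (Y 1 - Y i)) := by
        rw [← Finset.prod_mul_distrib]
        refine Finset.prod_pos ?_
        intro i hi
        simp only [Finset.mem_erase, Finset.mem_Icc] at hi
        have e1 := hT i hi.2.1 hi.2.2
        have e2 := hYmono 1 i le_rfl (by omega) hi.2.2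
        exact mul_pos_of_neg_of_neg (by linarith) (by linarith)
      have hQQ : Q.eval (p N) * Q.eval (Y 1) < 0 := by
        have h1 : Q.eval (p N) * (Q.eval (Y 1) * m)
            = -(w N * (Q.eval (p N) * Q.eval (p N))
              * ((∏ i ∈ (Finset.Icc 1 n).erase 1, (p N - Y i))
                * (∏ i ∈ (Finset.Icc 1 n).erase 1, (Y 1 - Y i)))) := by
          rw [hkey]; ring
        have h2 : 0 < Q.eval (p N) * Q.eval (p N) := mul_self_pos.mpr hC1
        have hneg : (Q.eval (p N) * Q.eval (Y 1)) * m < 0 := by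
          have e : (Q.eval (p N) * Q.eval (Y 1)) * m = Q.eval (p N) * (Q.eval (Y 1) * m) := by
            ring
          rw [e, h1]
          have := mul_pos (mul_pos hwN h2) hAB
          linarith
        by_contra hc
        push_neg at hc
        nlinarith
      exact ivt_zero Q (p N) (Y 1) htlt hQQ
    · -- middle interval
      have hk1 : 1 ≤ k := by omega
      obtain ⟨m1, hm1, hkey1⟩ := hC2 k hk1 (by omega)
      obtain ⟨m2, hm2, hkey2⟩ := hC2 (k+1) (by omega) hkn
      have hQQ : Q.eval (Y k) * Q.eval (Y (k+1)) < 0 := by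
        refine middle_neg n k hk1 hkn Y (p N) hYmono (Or.inr hT)
          (w N * Q.eval (p N)) m1 m2 _ _ hW hm1 hm2 (by rw [hkey1]; try ring)
          (by rw [hkey2]; try ring)
      exact ivt_zero Q (Y k) (Y (k+1)) (hYmono k (k+1) hk1 (by omega) hkn) hQQ
end

section
/- Fix an integer n ≥ 1. For α > 0, the Charlier polynomial C_n^{(α)} has n distinct real zeros x_1(α) < ⋯ < x_n(α) in (0, ∞), and for each j ∈ {1,...,n} the zero x_j(α) is a strictly increasing function of α on (0, ∞). -/
open Polynomial Finset

/-- Pochhammer symbol `(a)_k = ∏_{j=0}^{k-1} (a + j)`. -/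
noncomputable def poch (a : ℝ) (k : ℕ) : ℝ := ∏ j ∈ Finset.range k, (a + (j : ℝ))

/-- Charlier polynomial `C_n^{(α)}(x)`. -/
noncomputable def charlierPoly (n : ℕ) (α x : ℝ) : ℝ :=
  ∑ k ∈ Finset.range (n + 1),
    poch (-(n : ℝ)) k * poch (-x) k / (Nat.factorial k : ℝ) * (-1 / α) ^ k

noncomputable def chQ : ℕ → ℝ → Polynomial ℝ
  | 0, _ => 1
  | 1, α => X - C α
  | (n+2), α => (X - C ((n:ℝ) + 1 + α)) * chQ (n+1) α - C (((n:ℝ)+1) * α) * chQ n α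

noncomputable def chq (n : ℕ) (α y : ℝ) : ℝ := (chQ n α).eval y

lemma chq_zero (α y : ℝ) : chq 0 α y = 1 := by simp [chq, chQ]
lemma chq_one (α y : ℝ) : chq 1 α y = y - α := by simp [chq, chQ]
lemma chq_rec (n : ℕ) (α y : ℝ) :
    chq (n+2) α y = (y - ((n:ℝ) + 1 + α)) * chq (n+1) α y - ((n:ℝ)+1) * α * chq n α y := by
  simp [chq, chQ]

lemma two_step {P : ℕ → Prop} (h0 : P 0) (h1 : P 1) (hs : ∀ n, P n → P (n+1) → P (n+2)) :
    ∀ n, P n := by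
  have key : ∀ n, P n ∧ P (n+1) := by
    intro n
    induction n with
    | zero => exact ⟨h0, h1⟩
    | succ k ih => exact ⟨ih.2, hs k ih.1 ih.2⟩
  exact fun n => (key n).1

lemma chQ_monic (n : ℕ) (α : ℝ) : (chQ n α).Monic ∧ (chQ n α).natDegree = n := by
  induction n using two_step with
  | h0 => constructor <;> simp [chQ, monic_one]
  | h1 => exact ⟨monic_X_sub_C α, natDegree_X_sub_C α⟩
  | hs n ih1 ih2 =>
    have hm : ((X - C ((n:ℝ) + 1 + α)) * chQ (n+1) α).Monic :=
      (monic_X_sub_C _).mul ih2.1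
    have hd : ((X - C ((n:ℝ) + 1 + α)) * chQ (n+1) α).natDegree = n + 2 := by
      rw [(monic_X_sub_C _).natDegree_mul ih2.1, natDegree_X_sub_C, ih2.2]
      omega
    have hlt : (C (((n:ℝ)+1) * α) * chQ n α).degree
        < ((X - C ((n:ℝ) + 1 + α)) * chQ (n+1) α).degree := by
      have h1 : (C (((n:ℝ)+1) * α) * chQ n α).degree ≤ (n : WithBot ℕ) := by
        apply (degree_mul_le _ _).trans
        have := degree_C_le (a := ((n:ℝ)+1) * α)
        have h2 : (chQ n α).degree ≤ (n : WithBot ℕ) := by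
          rw [degree_eq_natDegree ih1.1.ne_zero, ih1.2]
        calc (C (((n:ℝ)+1)*α)).degree + (chQ n α).degree
            ≤ 0 + (n : WithBot ℕ) := add_le_add this h2
          _ = (n : WithBot ℕ) := by simp
      have h3 : ((X - C ((n:ℝ) + 1 + α)) * chQ (n+1) α).degree = ((n+2 : ℕ) : WithBot ℕ) := by
        rw [degree_eq_natDegree hm.ne_zero, hd]
      rw [h3]
      refine lt_of_le_of_lt h1 ?_
      exact_mod_cast Nat.lt_succ_of_lt (Nat.lt_succ_self n)
    have hnlt : (C (((n:ℝ)+1) * α) * chQ n α).natDegree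
        < ((X - C ((n:ℝ) + 1 + α)) * chQ (n+1) α).natDegree := by
      rcases eq_or_ne (C (((n:ℝ)+1) * α) * chQ n α) 0 with h | h
      · rw [h, natDegree_zero, hd]; omega
      · rw [natDegree_lt_natDegree_iff h]; exact hlt
    constructor
    · rw [chQ]; exact hm.sub_of_left hlt
    · rw [chQ, natDegree_sub_eq_left_of_natDegree_lt hnlt, hd]


lemma chq_cont (n : ℕ) : Continuous (fun p : ℝ × ℝ => chq n p.1 p.2) := by
  induction n using two_step with
  | h0 => simpa [chq_zero] using continuous_const
  | h1 =>
    have he : (fun p : ℝ × ℝ => chq 1 p.1 p.2) = fun p : ℝ × ℝ => p.2 - p.1 := by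
      funext p; rw [chq_one]
    rw [he]; fun_prop
  | hs n ih1 ih2 =>
    have he : (fun p : ℝ × ℝ => chq (n+2) p.1 p.2)
        = fun p : ℝ × ℝ => (p.2 - ((n:ℝ) + 1 + p.1)) * chq (n+1) p.1 p.2
          - ((n:ℝ)+1) * p.1 * chq n p.1 p.2 := by
      funext p; rw [chq_rec]
    rw [he]
    apply Continuous.sub
    · exact (by fun_prop : Continuous fun p : ℝ × ℝ => p.2 - ((n:ℝ)+1+p.1)).mul ih2
    · exact ((continuous_const.mul continuous_fst)).mul ih1

lemma chq_hasDeriv (n : ℕ) (y t : ℝ) :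
    HasDerivAt (fun s => chq (n+1) s y) (-((n:ℝ)+1) * chq n t y) t := by
  induction n using two_step generalizing t with
  | h0 =>
    have he : (fun s => chq 1 s y) = fun s => y - s := by funext s; rw [chq_one]
    rw [he, chq_zero]
    simpa using (hasDerivAt_id t).const_sub y
  | h1 =>
    have he : (fun s => chq 2 s y) = fun s => s^2 - 2*y*s + (y^2 - y) := by
      funext s
      rw [show (2:ℕ) = 0+2 from rfl, chq_rec, chq_one, chq_zero]
      push_cast; ring
    rw [he]
    have h := (((hasDerivAt_pow 2 t).sub ((hasDerivAt_id t).const_mul (2*y))).add_const (y^2 - y))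
    refine h.congr_deriv ?_
    rw [chq_one]; push_cast; ring
  | hs n ih1 ih2 =>
    have he : (fun s => chq (n+3) s y)
        = fun s => (y - ((n:ℝ) + 2 + s)) * chq (n+2) s y - (((n:ℝ)+2) * s) * chq (n+1) s y := by
      funext s
      rw [show n+3 = (n+1)+2 from rfl, chq_rec]
      push_cast; ring
    rw [he]
    have hF1 : HasDerivAt (fun s : ℝ => y - ((n:ℝ) + 2 + s)) (0 - (0 + 1)) t :=
      (hasDerivAt_const t y).sub ((hasDerivAt_const t ((n:ℝ)+2)).add (hasDerivAt_id t))
    have hF2 : HasDerivAt (fun s : ℝ => ((n:ℝ)+2) * s) (0 * id t + ((n:ℝ)+2) * 1) t :=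
      (hasDerivAt_const t ((n:ℝ)+2)).mul (hasDerivAt_id t)
    have key := (hF1.mul (ih2 t)).sub (hF2.mul (ih1 t))
    refine key.congr_deriv ?_
    have hr := chq_rec n t y
    push_cast at hr ⊢
    rw [hr]; ring

lemma chq_pos_aux (α : ℝ) (hα : 0 < α) :
    ∀ n, ∀ y ≤ 0, 0 < (-1:ℝ)^n * chq n α y ∧
      (α - y) * ((-1:ℝ)^n * chq n α y) ≤ (-1:ℝ)^(n+1) * chq (n+1) α y := by
  intro n
  induction n with
  | zero =>
    intro y hy
    constructor
    · simp [chq_zero]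
    · rw [chq_zero, chq_one]; ring_nf; nlinarith
  | succ n ih =>
    intro y hy
    obtain ⟨h1, h2⟩ := ih y hy
    have hn : (0:ℝ) ≤ n := Nat.cast_nonneg n
    have hpos : 0 < (-1:ℝ)^(n+1) * chq (n+1) α y := by nlinarith
    refine ⟨hpos, ?_⟩
    have hr := chq_rec n α y
    have hp1 : (-1:ℝ)^(n+2) = (-1:ℝ)^n := by ring
    have hp2 : (-1:ℝ)^(n+1) = -(-1:ℝ)^n := by ring
    rw [hp2] at h2 hpos
    rw [show n+1+1 = n+2 from rfl, hp1, hr, hp2]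
    have hv : α * ((-1:ℝ)^n * chq n α y) ≤ -(-1:ℝ)^n * chq (n+1) α y := by
      nlinarith [mul_nonneg (neg_nonneg.mpr hy) h1.le]
    have hkey := mul_le_mul_of_nonneg_left hv (by positivity : (0:ℝ) ≤ (n:ℝ)+1)
    nlinarith [hkey]
lemma chq_pos_nonpos (α : ℝ) (hα : 0 < α) (n : ℕ) :
    ∀ y ≤ 0, 0 < (-1:ℝ)^n * chq n α y := fun y hy => (chq_pos_aux α hα n y hy).1

lemma poch_zero (a : ℝ) : poch a 0 = 1 := by simp [poch]

lemma poch_succ (a : ℝ) (k : ℕ) : poch a (k+1) = poch a k * (a + k) := by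
  simp [poch, Finset.prod_range_succ]

lemma poch_succ' (a : ℝ) (k : ℕ) : poch a (k+1) = a * poch (a+1) k := by
  rw [poch, poch, Finset.prod_range_succ']
  simp only [Nat.cast_zero, add_zero, Nat.cast_add, Nat.cast_one]
  rw [mul_comm]
  congr 1
  apply Finset.prod_congr rfl
  intro j _
  push_cast; ring

lemma poch_nat_zero (m k : ℕ) (h : m < k) : poch (-(m:ℝ)) k = 0 := by
  apply Finset.prod_eq_zero (Finset.mem_range.mpr h)
  simp

/-- summand of the Charlier polynomial -/
noncomputable def chT (n : ℕ) (α x : ℝ) (k : ℕ) : ℝ :=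
  poch (-(n : ℝ)) k * poch (-x) k / (Nat.factorial k : ℝ) * (-1 / α) ^ k

lemma charlier_eq_sum (n : ℕ) (α x : ℝ) {N : ℕ} (h : n + 1 ≤ N) :
    charlierPoly n α x = ∑ k ∈ Finset.range N, chT n α x k := by
  rw [charlierPoly]
  apply Finset.sum_subset
  · exact Finset.range_subset_range.mpr h
  · intro k _ hk
    rw [Finset.mem_range, not_lt] at hk
    show poch (-(n : ℝ)) k * poch (-x) k / (Nat.factorial k : ℝ) * (-1 / α) ^ k = 0
    rw [poch_nat_zero n k (by omega)]
    simp

lemma poch_id (n k : ℕ) (α : ℝ) :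
    α * poch (-((n:ℝ)+2)) (k+1) + ((n:ℝ)+1) * poch (-(n:ℝ)) (k+1)
      - (((n:ℝ)+1+α) - ((k:ℝ)+1)) * poch (-((n:ℝ)+1)) (k+1)
    = -α * ((k:ℝ)+1) * poch (-((n:ℝ)+1)) k := by
  have e1 : poch (-((n:ℝ)+2)) (k+1) = (-((n:ℝ)+2)) * poch (-((n:ℝ)+1)) k := by
    rw [poch_succ']; congr 2; ring
  have e2 : poch (-(n:ℝ)) (k+1) = poch (-(n:ℝ)) k * (-(n:ℝ) + k) := poch_succ _ k
  have e3 : poch (-((n:ℝ)+1)) (k+1) = (-((n:ℝ)+1)) * poch (-(n:ℝ)) k := by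
    rw [poch_succ']; congr 2; ring
  have e4 : poch (-((n:ℝ)+1)) (k+1) = poch (-((n:ℝ)+1)) k * (-((n:ℝ)+1) + k) :=
    poch_succ _ k
  have h34 : (-((n:ℝ)+1)) * poch (-(n:ℝ)) k = poch (-((n:ℝ)+1)) k * (-((n:ℝ)+1) + k) :=
    e3.symm.trans e4
  rw [e1, e2, e3]
  linear_combination (-α) * h34

lemma term_id (n k : ℕ) (α x : ℝ) (hα : α ≠ 0) :
    α * chT (n+2) α x (k+1) + ((n:ℝ)+1) * chT n α x (k+1)
      - ((((n:ℝ)+1+α)) - ((k:ℝ)+1)) * chT (n+1) α x (k+1)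
    = (poch (-((n:ℝ)+1)) k / (Nat.factorial k : ℝ) * (-1/α)^k) * poch (-x) (k+1) := by
  have h := poch_id n k α
  have hf : (Nat.factorial (k+1) : ℝ) = ((k:ℝ)+1) * (Nat.factorial k : ℝ) := by
    rw [Nat.factorial_succ]; push_cast; ring
  have hfk : (Nat.factorial k : ℝ) ≠ 0 := Nat.cast_ne_zero.mpr (Nat.factorial_ne_zero k)
  have hk1 : ((k:ℝ)+1) ≠ 0 := by positivity
  have hc2 : (-(((n+2):ℕ):ℝ)) = (-((n:ℝ)+2)) := by push_cast; ring
  have hc1 : (-(((n+1):ℕ):ℝ)) = (-((n:ℝ)+1)) := by push_cast; ring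
  simp only [chT, hf, pow_succ, hc2, hc1]
  calc α * (poch (-((n:ℝ)+2)) (k+1) * poch (-x) (k+1) / (((k:ℝ)+1) * (Nat.factorial k : ℝ))
          * ((-1/α)^k * (-1/α)))
        + ((n:ℝ)+1) * (poch (-(n:ℝ)) (k+1) * poch (-x) (k+1) / (((k:ℝ)+1) * (Nat.factorial k : ℝ))
          * ((-1/α)^k * (-1/α)))
        - ((((n:ℝ)+1+α)) - ((k:ℝ)+1)) * (poch (-((n:ℝ)+1)) (k+1) * poch (-x) (k+1)
          / (((k:ℝ)+1) * (Nat.factorial k : ℝ)) * ((-1/α)^k * (-1/α)))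
      = (α * poch (-((n:ℝ)+2)) (k+1) + ((n:ℝ)+1) * poch (-(n:ℝ)) (k+1)
          - (((n:ℝ)+1+α) - ((k:ℝ)+1)) * poch (-((n:ℝ)+1)) (k+1))
        * (poch (-x) (k+1) * ((-1/α)^k * (-1/α)) / (((k:ℝ)+1) * (Nat.factorial k : ℝ))) := by
        ring
    _ = (-α * ((k:ℝ)+1) * poch (-((n:ℝ)+1)) k)
        * (poch (-x) (k+1) * ((-1/α)^k * (-1/α)) / (((k:ℝ)+1) * (Nat.factorial k : ℝ))) := by
        rw [h]
    _ = (poch (-((n:ℝ)+1)) k / (Nat.factorial k : ℝ) * (-1/α)^k) * poch (-x) (k+1) := by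
        field_simp

lemma charlier_rec (n : ℕ) (α x : ℝ) (hα : α ≠ 0) :
    α * charlierPoly (n+2) α x
    = (((n:ℝ)+1+α) - x) * charlierPoly (n+1) α x - ((n:ℝ)+1) * charlierPoly n α x := by
  have hc1 : (-(((n+1):ℕ):ℝ)) = (-((n:ℝ)+1)) := by push_cast; ring
  rw [charlier_eq_sum (n+2) α x (le_refl (n+3)),
      charlier_eq_sum (n+1) α x (by omega : (n+1)+1 ≤ n+3),
      charlier_eq_sum n α x (by omega : n+1 ≤ n+3)]
  rw [← sub_eq_zero]
  have main : ∑ k ∈ Finset.range (n+3),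
        (α * chT (n+2) α x k + ((n:ℝ)+1) * chT n α x k
          - ((((n:ℝ)+1+α)) - (k:ℝ)) * chT (n+1) α x k)
      = ∑ k ∈ Finset.range (n+3),
        (poch (-((n:ℝ)+1)) k / (Nat.factorial k : ℝ) * (-1/α)^k * poch (-x) (k+1)) := by
    conv_lhs => rw [Finset.sum_range_succ' _ (n+2)]
    conv_rhs => rw [Finset.sum_range_succ]
    have hA0 : α * chT (n+2) α x 0 + ((n:ℝ)+1) * chT n α x 0
        - ((((n:ℝ)+1+α)) - ((0:ℕ):ℝ)) * chT (n+1) α x 0 = 0 := by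
      have hT : ∀ m : ℕ, chT m α x 0 = 1 := by
        intro m
        show poch (-(m:ℝ)) 0 * poch (-x) 0 / (Nat.factorial 0 : ℝ) * (-1/α)^0 = 1
        simp [poch_zero]
      rw [hT, hT, hT]
      push_cast
      ring
    have hBtop : poch (-((n:ℝ)+1)) (n+2) / (Nat.factorial (n+2) : ℝ) * (-1/α)^(n+2)
        * poch (-x) (n+3) = 0 := by
      rw [← hc1, poch_nat_zero (n+1) (n+2) (by omega)]
      simp
    rw [hA0, hBtop, add_zero, add_zero]
    apply Finset.sum_congr rfl
    intro k hk
    have ht := term_id n k α x hα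
    push_cast
    linear_combination ht
  calc α * (∑ k ∈ Finset.range (n+3), chT (n+2) α x k)
        - ((((n:ℝ)+1+α) - x) * (∑ k ∈ Finset.range (n+3), chT (n+1) α x k)
          - ((n:ℝ)+1) * (∑ k ∈ Finset.range (n+3), chT n α x k))
      = ∑ k ∈ Finset.range (n+3),
          ((α * chT (n+2) α x k + ((n:ℝ)+1) * chT n α x k
            - ((((n:ℝ)+1+α)) - (k:ℝ)) * chT (n+1) α x k)
          - (poch (-((n:ℝ)+1)) k / (Nat.factorial k : ℝ) * (-1/α)^k * poch (-x) (k+1))) := by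
        rw [Finset.mul_sum, Finset.mul_sum, Finset.mul_sum, ← Finset.sum_sub_distrib,
          ← Finset.sum_sub_distrib]
        apply Finset.sum_congr rfl
        intro k hk
        have hx : x * chT (n+1) α x k = (k:ℝ) * chT (n+1) α x k
            - poch (-((n:ℝ)+1)) k / (Nat.factorial k : ℝ) * (-1/α)^k * poch (-x) (k+1) := by
          have hps : poch (-x) (k+1) = poch (-x) k * (-x + k) := poch_succ _ k
          have hT : chT (n+1) α x k
              = poch (-((n:ℝ)+1)) k * poch (-x) k / (Nat.factorial k : ℝ) * (-1/α)^k := by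
            show poch (-(((n+1):ℕ):ℝ)) k * poch (-x) k / (Nat.factorial k : ℝ) * (-1/α)^k = _
            rw [hc1]
          rw [hT, hps]
          ring
        linear_combination hx
    _ = (∑ k ∈ Finset.range (n+3),
          (α * chT (n+2) α x k + ((n:ℝ)+1) * chT n α x k
            - ((((n:ℝ)+1+α)) - (k:ℝ)) * chT (n+1) α x k))
        - ∑ k ∈ Finset.range (n+3),
          (poch (-((n:ℝ)+1)) k / (Nat.factorial k : ℝ) * (-1/α)^k * poch (-x) (k+1)) :=
        Finset.sum_sub_distrib _ _
    _ = 0 := by rw [main]; ring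

lemma charlier_zero (α x : ℝ) : charlierPoly 0 α x = 1 := by
  rw [charlierPoly]
  simp [poch_zero]

lemma charlier_one (α x : ℝ) (hα : α ≠ 0) : charlierPoly 1 α x = 1 - x / α := by
  rw [charlierPoly]
  rw [Finset.sum_range_succ, Finset.sum_range_one]
  have h1 : poch (-(1:ℕ):ℝ) 1 = -1 := by rw [show (1:ℕ) = 0+1 from rfl, poch_succ, poch_zero]; norm_num
  have h2 : poch (-x) 1 = -x := by rw [show (1:ℕ) = 0+1 from rfl, poch_succ, poch_zero]; norm_num
  rw [h1, h2]
  simp [poch_zero]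
  field_simp
  ring

lemma charlier_link (α : ℝ) (hα : α ≠ 0) (n : ℕ) (x : ℝ) :
    charlierPoly n α x = (-1/α)^n * chq n α x := by
  induction n using two_step generalizing x with
  | h0 => rw [charlier_zero, chq_zero]; simp
  | h1 =>
    rw [charlier_one α x hα, chq_one]
    field_simp
    ring
  | hs n ih1 ih2 =>
    have h := charlier_rec n α x hα
    have hq := chq_rec n α x
    have key : α * charlierPoly (n+2) α x = α * ((-1/α)^(n+2) * chq (n+2) α x) := by
      rw [h, ih1 x, ih2 x, hq]
      simp only [pow_succ]
      field_simp
      ring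
    exact mul_left_cancel₀ hα key


lemma chQ_zero (α : ℝ) : chQ 0 α = 1 := rfl
lemma chQ_one (α : ℝ) : chQ 1 α = X - C α := rfl

lemma neg_one_sq_pow (e : ℕ) : (-1:ℝ)^e * (-1:ℝ)^e = 1 := by
  rw [← pow_add]
  exact Even.neg_one_pow ⟨e, by ring⟩

lemma prod_sign {r : ℕ → ℝ} {y : ℝ} {M j : ℕ} (hj : j ≤ M)
    (h1 : ∀ i, i < j → r i < y) (h2 : ∀ i, j ≤ i → i < M → y < r i) :
    0 < (-1:ℝ)^(M-j) * ∏ i ∈ Finset.range M, (y - r i) := by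
  rw [← Finset.prod_range_mul_prod_Ico _ hj]
  have hpos1 : 0 < ∏ i ∈ Finset.range j, (y - r i) :=
    Finset.prod_pos (fun i hi => sub_pos.mpr (h1 i (Finset.mem_range.mp hi)))
  have hpos2 : 0 < ∏ i ∈ Finset.Ico j M, (r i - y) :=
    Finset.prod_pos (fun i hi => sub_pos.mpr
      (h2 i (Finset.mem_Ico.mp hi).1 (Finset.mem_Ico.mp hi).2))
  have hico : ∏ i ∈ Finset.Ico j M, (y - r i)
      = (-1:ℝ)^(M-j) * ∏ i ∈ Finset.Ico j M, (r i - y) := by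
    calc ∏ i ∈ Finset.Ico j M, (y - r i) = ∏ i ∈ Finset.Ico j M, ((-1) * (r i - y)) := by
          apply Finset.prod_congr rfl; intro i _; ring
      _ = (∏ _i ∈ Finset.Ico j M, (-1:ℝ)) * ∏ i ∈ Finset.Ico j M, (r i - y) :=
          Finset.prod_mul_distrib
      _ = (-1:ℝ)^(M-j) * ∏ i ∈ Finset.Ico j M, (r i - y) := by
          rw [Finset.prod_const, Nat.card_Ico]
  rw [hico]
  have heq : (-1:ℝ)^(M-j) * ((∏ i ∈ Finset.range j, (y - r i))
      * ((-1:ℝ)^(M-j) * ∏ i ∈ Finset.Ico j M, (r i - y)))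
      = ((∏ i ∈ Finset.range j, (y - r i)) * (∏ i ∈ Finset.Ico j M, (r i - y))) := by
    have h := neg_one_sq_pow (M-j)
    linear_combination ((∏ i ∈ Finset.range j, (y - r i))
      * (∏ i ∈ Finset.Ico j M, (r i - y))) * h
  rw [heq]
  exact mul_pos hpos1 hpos2

lemma monic_eq_prod {p : Polynomial ℝ} (hm : p.Monic) {N : ℕ} (hdeg : p.natDegree = N)
    (s : ℕ → ℝ) (hmono : ∀ i j, i < j → j < N → s i < s j)
    (hroot : ∀ j, j < N → p.eval (s j) = 0) :
    p = ∏ j ∈ Finset.range N, (X - C (s j)) := by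
  have hinj : Set.InjOn s (Finset.range N) := by
    intro i hi j hj hij
    simp only [Finset.coe_range, Set.mem_Iio] at hi hj
    by_contra hne
    rcases lt_or_gt_of_ne hne with h | h
    · exact absurd hij (ne_of_lt (hmono i j h hj))
    · exact absurd hij.symm (ne_of_lt (hmono j i h hi))
  set t : Finset ℝ := (Finset.range N).image s with ht
  have htc : t.card = N := by
    rw [ht, Finset.card_image_of_injOn hinj, Finset.card_range]
  have hsub : t.val ≤ p.roots := by
    rw [Multiset.le_iff_count]
    intro a
    by_cases ha : a ∈ t
    · have h1 : t.val.count a = 1 := by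
        rw [Multiset.count_eq_one_of_mem t.nodup ha]
      rw [h1]
      rw [Multiset.one_le_count_iff_mem]
      rw [Polynomial.mem_roots hm.ne_zero]
      obtain ⟨j, hj, rfl⟩ := Finset.mem_image.mp ha
      exact hroot j (Finset.mem_range.mp hj)
    · have h1 : t.val.count a = 0 := by
        rwa [Multiset.count_eq_zero]
      rw [h1]
      exact Nat.zero_le _
  have hD : (∏ a ∈ t, (X - C a)) ∣ p := by
    have h1 : ∏ a ∈ t, (X - C a) = (t.val.map fun a => X - C a).prod := rfl
    rw [h1]
    exact (Multiset.prod_dvd_prod_of_le (Multiset.map_le_map hsub)).trans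
      (prod_multiset_X_sub_C_dvd p)
  have hDm : (∏ a ∈ t, (X - C a)).Monic := monic_prod_of_monic _ _ (fun a _ => monic_X_sub_C a)
  have hDdeg : (∏ a ∈ t, (X - C a)).natDegree = N := by
    rw [Polynomial.natDegree_prod _ _ (fun a _ => X_sub_C_ne_zero a)]
    simp [htc]
  obtain ⟨u, hu⟩ := hD
  have hu0 : u ≠ 0 := by
    intro h
    rw [h, mul_zero] at hu
    exact hm.ne_zero hu
  have hdu : u.natDegree = 0 := by
    have := Polynomial.natDegree_mul hDm.ne_zero hu0
    rw [← hu, hdeg, hDdeg] at this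
    omega
  obtain ⟨c, rfl⟩ := Polynomial.natDegree_eq_zero.mp hdu
  have hc : c = 1 := by
    have h1 := hm.leadingCoeff
    rw [hu, Polynomial.leadingCoeff_mul, hDm.leadingCoeff, one_mul] at h1
    simpa using h1
  rw [hc, map_one, mul_one] at hu
  rw [hu, ht]
  exact Finset.prod_image (fun i hi j hj h => hinj (by simpa using hi) (by simpa using hj) h)

lemma monic_exists_eval_pos {p : Polynomial ℝ} (hm : p.Monic) (hd : 0 < p.natDegree) (L : ℝ) :
    ∃ M, L < M ∧ 0 < p.eval M := by
  have ht := Polynomial.tendsto_atTop_of_leadingCoeff_nonneg p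
    (Polynomial.natDegree_pos_iff_degree_pos.mp hd) (by rw [hm.leadingCoeff]; norm_num)
  have := (ht.eventually_gt_atTop 0).and (Filter.eventually_gt_atTop L)
  obtain ⟨M, h1, h2⟩ := this.exists
  exact ⟨M, h2, h1⟩

lemma chq_root_between {m : ℕ} {α a b : ℝ} (hab : a < b)
    (hsign : chq m α a * chq m α b < 0) : ∃ y, a < y ∧ y < b ∧ chq m α y = 0 := by
  have hcont : ContinuousOn (fun y => chq m α y) (Set.Icc a b) :=
    ((chQ m α).continuous_aeval).continuousOn
  rcases lt_or_ge (chq m α a) 0 with h | h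
  · have hb : 0 < chq m α b := by nlinarith
    have h0 : (0:ℝ) ∈ Set.Ioo (chq m α a) (chq m α b) := ⟨h, hb⟩
    obtain ⟨y, hy, hy0⟩ := intermediate_value_Ioo (le_of_lt hab) hcont h0
    exact ⟨y, hy.1, hy.2, hy0⟩
  · have ha : 0 < chq m α a := by
      rcases h.lt_or_eq with h' | h'
      · exact h'
      · exfalso; rw [← h'] at hsign; simp at hsign
    have hb : chq m α b < 0 := by nlinarith
    have h0 : (0:ℝ) ∈ Set.Ioo (chq m α b) (chq m α a) := ⟨hb, ha⟩
    obtain ⟨y, hy, hy0⟩ := intermediate_value_Ioo' (le_of_lt hab) hcont h0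
    exact ⟨y, hy.1, hy.2, hy0⟩

/-- Induction invariant: roots of `chQ m α` with interlacing sign data. -/
def RE (α : ℝ) (m : ℕ) : Prop :=
  ∃ r : ℕ → ℝ, (∀ i j, i < j → j < m → r i < r j) ∧ (∀ j, j < m → 0 < r j) ∧
    chQ m α = ∏ j ∈ Finset.range m, (X - C (r j)) ∧
    (∀ j, j < m → 0 < (-1:ℝ)^(m-1-j) * chq (m-1) α (r j))

lemma chq_eval_prod {α : ℝ} {m : ℕ} {r : ℕ → ℝ}
    (hf : chQ m α = ∏ j ∈ Finset.range m, (X - C (r j))) (y : ℝ) :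
    chq m α y = ∏ j ∈ Finset.range m, (y - r j) := by
  rw [chq, hf, Polynomial.eval_prod]
  apply Finset.prod_congr rfl
  intro j _
  simp

theorem RE_all (α : ℝ) (hα : 0 < α) : ∀ m, RE α m := by
  intro m
  induction m using two_step with
  | h0 =>
    refine ⟨fun _ => 0, by omega, by omega, ?_, by omega⟩
    rw [chQ_zero]; simp
  | h1 =>
    refine ⟨fun _ => α, by omega, fun j _ => hα, ?_, ?_⟩
    · rw [chQ_one]; simp
    · intro j hj
      interval_cases j
      have : chq 0 α α = 1 := by rw [chq, chQ_zero]; simp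
      rw [this]; norm_num
  | hs m ihm ih =>
    clear ihm
    obtain ⟨r, hord, hpos, hfac, hsig⟩ := ih
    -- evaluation of chq (m+1) as a product
    have hq1 : ∀ y, chq (m+1) α y = ∏ j ∈ Finset.range (m+1), (y - r j) := chq_eval_prod hfac
    have hq1r : ∀ j, j < m+1 → chq (m+1) α (r j) = 0 := by
      intro j hj
      rw [hq1]
      exact Finset.prod_eq_zero (Finset.mem_range.mpr hj) (by ring)
    -- value of chq (m+2) at the old roots
    have hval : ∀ j, j < m+1 → chq (m+2) α (r j) = -(((m:ℝ)+1) * α * chq m α (r j)) := by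
      intro j hj
      rw [chq_rec, hq1r j hj]
      ring
    -- sign of chq (m+2) at old roots : 0 < (-1)^(m+1-j) * chq (m+2) α (r j)
    have hsig2 : ∀ j, j < m+1 → 0 < (-1:ℝ)^(m+1-j) * chq (m+2) α (r j) := by
      intro j hj
      have h1 := hsig j hj
      have he : m+1-1-j = m-j := by omega
      rw [he] at h1
      norm_num at h1
      rw [hval j hj]
      have he2 : m+1-j = (m-j)+1 := by omega
      rw [he2, pow_succ]
      have hma : 0 < ((m:ℝ)+1) * α := by positivity
      nlinarith
    -- a point M beyond the last root where chq (m+2) is positive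
    obtain ⟨M, hM1, hM2⟩ := monic_exists_eval_pos (chQ_monic (m+2) α).1
      (by rw [(chQ_monic (m+2) α).2]; omega) (r m)
    -- interval endpoints
    set lo : ℕ → ℝ := fun j => if j = 0 then 0 else r (j-1) with hlo
    set hi : ℕ → ℝ := fun j => if j ≤ m then r j else M with hhi
    have hlt : ∀ j, j ≤ m+1 → lo j < hi j := by
      intro j hj
      rcases Nat.eq_zero_or_pos j with rfl | hj0
      · simp only [hlo, hhi, if_pos rfl, if_pos (Nat.zero_le m)]
        exact hpos 0 (by omega)
      · rcases Nat.lt_or_ge j (m+1) with hjm | hjm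
        · simp only [hlo, hhi, if_neg (by omega : ¬ j = 0), if_pos (by omega : j ≤ m)]
          exact hord (j-1) j (by omega) (by omega)
        · have hjeq : j = m+1 := by omega
          subst hjeq
          simp only [hlo, hhi, if_neg (by omega : ¬ m+1 = 0), if_neg (by omega : ¬ m+1 ≤ m)]
          simpa using hM1
    -- sign facts at endpoints
    have hsiglo : ∀ j, j ≤ m+1 → 0 < (-1:ℝ)^(m+2-j) * chq (m+2) α (lo j) := by
      intro j hj
      rcases Nat.eq_zero_or_pos j with rfl | hj0
      · simp only [hlo, if_pos rfl, Nat.sub_zero]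
        exact chq_pos_nonpos α hα (m+2) 0 le_rfl
      · simp only [hlo, if_neg (by omega : ¬ j = 0)]
        have := hsig2 (j-1) (by omega)
        have he : m+1-(j-1) = m+2-j := by omega
        rwa [he] at this
    have hsighi : ∀ j, j ≤ m+1 → 0 < (-1:ℝ)^(m+1-j) * chq (m+2) α (hi j) := by
      intro j hj
      rcases Nat.lt_or_ge j (m+1) with hjm | hjm
      · simp only [hhi, if_pos (by omega : j ≤ m)]
        exact hsig2 j hjm
      · have hjeq : j = m+1 := by omega
        subst hjeq
        simp only [hhi, if_neg (by omega : ¬ m+1 ≤ m)]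
        simpa [chq] using hM2
    -- root in each interval
    have hIVT : ∀ j, ∃ y, j ≤ m+1 → lo j < y ∧ y < hi j ∧ chq (m+2) α y = 0 := by
      intro j
      by_cases hj : j ≤ m+1
      · have hprod : chq (m+2) α (lo j) * chq (m+2) α (hi j) < 0 := by
          have h1 := hsiglo j hj
          have h2 := hsighi j hj
          have hodd : (-1:ℝ)^(m+2-j) * (-1:ℝ)^(m+1-j) = -1 := by
            rw [← pow_add]
            exact Odd.neg_one_pow ⟨m+1-j, by omega⟩
          nlinarith
        obtain ⟨y, hy1, hy2, hy3⟩ := chq_root_between (hlt j hj) hprod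
        exact ⟨y, fun _ => ⟨hy1, hy2, hy3⟩⟩
      · exact ⟨0, fun h => absurd h hj⟩
    set s : ℕ → ℝ := fun j => (hIVT j).choose with hs
    have hsspec : ∀ j, j ≤ m+1 → lo j < s j ∧ s j < hi j ∧ chq (m+2) α (s j) = 0 :=
      fun j hj => (hIVT j).choose_spec hj
    -- ordering helper : hi i ≤ lo j for i < j ≤ m+1
    have hsep : ∀ i j, i < j → j ≤ m+1 → hi i ≤ lo j := by
      intro i j hij hj
      simp only [hhi, hlo, if_pos (by omega : i ≤ m), if_neg (by omega : ¬ j = 0)]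
      rcases Nat.lt_or_ge i (j-1) with h | h
      · exact le_of_lt (hord i (j-1) h (by omega))
      · have : i = j-1 := by omega
        rw [this]
    have hordS : ∀ i j, i < j → j < m+2 → s i < s j := by
      intro i j hij hj
      have h1 := (hsspec i (by omega)).2.1
      have h2 := (hsspec j (by omega)).1
      have h3 := hsep i j hij (by omega)
      linarith
    have hposS : ∀ j, j < m+2 → 0 < s j := by
      intro j hj
      have h1 := (hsspec j (by omega)).1
      rcases Nat.eq_zero_or_pos j with rfl | hj0
      · simpa only [hlo, if_pos rfl] using h1
      · have h2 : 0 < lo j := by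
          simp only [hlo, if_neg (by omega : ¬ j = 0)]
          exact hpos (j-1) (by omega)
        linarith
    -- factorization of chQ (m+2)
    have hfacS : chQ (m+2) α = ∏ j ∈ Finset.range (m+2), (X - C (s j)) := by
      apply monic_eq_prod (chQ_monic (m+2) α).1 (chQ_monic (m+2) α).2 s hordS
      intro j hj
      exact (hsspec j (by omega)).2.2
    -- sign data of chq (m+1) at the new roots
    have hsigS : ∀ j, j < m+2 → 0 < (-1:ℝ)^(m+2-1-j) * chq (m+1) α (s j) := by
      intro j hj
      rw [hq1 (s j)]
      have he : m+2-1-j = m+1-j := by omega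
      rw [he]
      apply prod_sign (by omega : j ≤ m+1)
      · intro i hi
        have hj1 : 1 ≤ j := by omega
        have h2 := (hsspec j (by omega)).1
        have h3 : r i ≤ lo j := by
          simp only [hlo, if_neg (by omega : ¬ j = 0)]
          rcases Nat.lt_or_ge i (j-1) with h | h
          · exact le_of_lt (hord i (j-1) h (by omega))
          · have : i = j-1 := by omega
            rw [this]
        linarith
      · intro i hji him
        have h2 := (hsspec j (by omega)).2.1
        have h3 : hi j ≤ r i := by
          simp only [hhi, if_pos (by omega : j ≤ m)]
          rcases Nat.lt_or_ge j i with h | h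
          · exact le_of_lt (hord j i h him)
          · have : j = i := by omega
            rw [this]
        linarith
    exact ⟨s, hordS, hposS, hfacS, hsigS⟩


lemma RE_eval (α : ℝ) (hα : 0 < α) (m : ℕ) : ∃ r : ℕ → ℝ,
    (∀ i j, i < j → j < m → r i < r j) ∧ (∀ j, j < m → 0 < r j) ∧
    (∀ y, chq m α y = ∏ j ∈ Finset.range m, (y - r j)) ∧
    (∀ j, j < m → 0 < (-1:ℝ)^(m-1-j) * chq (m-1) α (r j)) := by
  obtain ⟨r, h1, h2, h3, h4⟩ := RE_all α hα m
  exact ⟨r, h1, h2, fun y => chq_eval_prod h3 y, h4⟩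

/-- a function on `Ioi 0` that is locally strictly increasing (in a two-sided pairwise sense)
is strictly increasing. -/
lemma strictMonoOn_of_local (f : ℝ → ℝ)
    (h : ∀ a : ℝ, 0 < a → ∃ ε > 0, ∀ u v : ℝ, a - ε < u → 0 < u → u < v → v < a + ε → f u < f v) :
    StrictMonoOn f (Set.Ioi 0) := by
  intro a ha b hb hab
  simp only [Set.mem_Ioi] at ha hb
  set S : Set ℝ := {s | s ∈ Set.Icc a b ∧ ∀ u v, a ≤ u → u < v → v ≤ s → f u < f v} with hS
  have haS : a ∈ S := ⟨⟨le_refl a, le_of_lt hab⟩, fun u v hu huv hv => absurd (lt_of_le_of_lt hu (lt_of_lt_of_le huv hv)) (lt_irrefl a)⟩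
  have hbdd : BddAbove S := ⟨b, fun s hs => hs.1.2⟩
  have hne : S.Nonempty := ⟨a, haS⟩
  set c := sSup S with hc
  have hcIcc : c ∈ Set.Icc a b := by
    constructor
    · exact le_csSup hbdd haS
    · exact csSup_le hne (fun s hs => hs.1.2)
  have hc0 : 0 < c := lt_of_lt_of_le ha hcIcc.1
  obtain ⟨ε, hε, hloc⟩ := h c hc0
  -- c ∈ S
  have hcS : c ∈ S := by
    rcases eq_or_lt_of_le hcIcc.1 with heq | hac
    · rw [← heq]; exact haS
    · -- pick s ∈ S with s > max a (c - ε)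
      have hlt : max a (c - ε) < c := by
        rcases max_cases a (c - ε) with ⟨h1, _⟩ | ⟨h1, _⟩ <;> rw [h1] <;> [exact hac; linarith]
      obtain ⟨s, hsS, hs⟩ := exists_lt_of_lt_csSup hne hlt
      have hsc : s ≤ c := le_csSup hbdd hsS
      refine ⟨hcIcc, fun u v hu huv hv => ?_⟩
      rcases le_or_gt v s with hvs | hvs
      · exact hsS.2 u v hu huv hvs
      · rcases le_or_gt u (c - ε) with hue | hue
        · have h1 : f u < f s := hsS.2 u s hu (by linarith [le_max_right a (c-ε), le_max_left a (c-ε)]) (le_refl s)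
          have h2 : f s < f v := hloc s v (by linarith [le_max_right a (c-ε)]) (by linarith [le_max_left a (c-ε)]) hvs (by linarith)
          linarith
        · exact hloc u v hue (by linarith) huv (by linarith)
  -- c = b
  have hcb : c = b := by
    by_contra hne'
    have hcb' : c < b := lt_of_le_of_ne hcIcc.2 hne'
    set d := min b (c + ε/2) with hd
    have hdc : c < d := by
      rw [hd, lt_min_iff]
      exact ⟨hcb', by linarith⟩
    have hdS : d ∈ S := by
      refine ⟨⟨by linarith [hcIcc.1], min_le_left _ _⟩, fun u v hu huv hv => ?_⟩
      rcases le_or_gt v c with hvc | hvc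
      · exact hcS.2 u v hu huv hvc
      · have hvd : v ≤ c + ε/2 := le_trans hv (min_le_right _ _)
        rcases le_or_gt u (c - ε) with hue | hue
        · have h1 : f u < f c := hcS.2 u c hu (by linarith) (le_refl c)
          have h2 : f c < f v := hloc c v (by linarith) hc0 hvc (by linarith)
          linarith
        · exact hloc u v hue (by linarith) huv (by linarith)
    have : d ≤ c := le_csSup hbdd hdS
    linarith
  have := hcS.2 a b (le_refl a) hab (by rw [hcb])
  exact this

/-- the specification of the ordered root vector -/
def CSpec (n : ℕ) (α : ℝ) (r : Fin n → ℝ) : Prop :=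
  StrictMono r ∧ (∀ j, r j ∈ Set.Ioi (0:ℝ)) ∧ (∀ j, charlierPoly n α (r j) = 0) ∧
  (∀ y : ℝ, charlierPoly n α y = 0 → ∃ j, y = r j)

lemma chq_zero_iff {n : ℕ} {α y : ℝ} (hα : 0 < α) :
    charlierPoly n α y = 0 ↔ chq n α y = 0 := by
  rw [charlier_link α (ne_of_gt hα)]
  constructor
  · intro h
    rcases mul_eq_zero.mp h with h | h
    · exact absurd h (pow_ne_zero n (div_ne_zero (by norm_num) (ne_of_gt hα)))
    · exact h
  · intro h; rw [h, mul_zero]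

lemma exists_pos_lt (K : ℕ) (g : ℕ → ℝ) (hg : ∀ j, j < K → 0 < g j) :
    ∃ d, 0 < d ∧ ∀ j, j < K → d < g j := by
  induction K with
  | zero => exact ⟨1, one_pos, by omega⟩
  | succ k ih =>
    obtain ⟨d, hd, hlt⟩ := ih (fun j hj => hg j (by omega))
    have hgk : 0 < g k := hg k (by omega)
    refine ⟨min d (g k / 2), lt_min hd (by positivity), ?_⟩
    intro j hj
    rcases Nat.lt_or_ge j k with h | h
    · exact lt_of_le_of_lt (min_le_left _ _) (hlt j h)
    · have : j = k := by omega
      subst this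
      exact lt_of_le_of_lt (min_le_right _ _) (by linarith)

lemma local_mono (K : ℕ) (x : ℝ → Fin (K+1) → ℝ)
    (hX : ∀ t, 0 < t → CSpec (K+1) t (x t)) (α0 : ℝ) (hα0 : 0 < α0) :
    ∃ ε > 0, ∀ u v, α0 - ε < u → 0 < u → u < v → v < α0 + ε → ∀ j, x u j < x v j := by
  obtain ⟨r, hrord, hrpos, hrev, hrsig⟩ := RE_eval α0 hα0 (K+1)
  simp only [Nat.add_sub_cancel] at hrsig
  obtain ⟨rr, _, _, hrrev, _⟩ := RE_eval α0 hα0 K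
  -- r j is never a root of chq K α0
  have hne : ∀ j i, j < K+1 → i < K → r j ≠ rr i := by
    intro j i hj hi heq
    have h1 := hrsig j hj
    have h2 : chq K α0 (rr i) = 0 := by
      rw [hrrev]
      exact Finset.prod_eq_zero (Finset.mem_range.mpr hi) (by ring)
    rw [heq, h2] at h1
    simp at h1
  -- choose δ
  obtain ⟨d1, hd1, hgap⟩ := exists_pos_lt K (fun j => (r (j+1) - r j)/2)
    (fun j hj => by have := hrord j (j+1) (by omega) (by omega); linarith)
  obtain ⟨d2, hd2, hdist⟩ : ∃ d, 0 < d ∧ ∀ j i, j < K+1 → i < K → d < |r j - rr i| := by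
    rcases Nat.eq_zero_or_pos K with rfl | hK
    · exact ⟨1, one_pos, by omega⟩
    · have hgpos : ∀ p, p < (K+1)*K → 0 < |r (p / K) - rr (p % K)| := by
        intro p hp
        have hdiv : p / K < K + 1 :=
          Nat.div_lt_of_lt_mul (by rw [Nat.mul_comm (K+1) K] at hp; exact hp)
        have hmod : p % K < K := Nat.mod_lt p hK
        rw [abs_pos, sub_ne_zero]
        exact hne _ _ hdiv hmod
      obtain ⟨d, hd, h⟩ := exists_pos_lt ((K+1)*K) (fun p => |r (p / K) - rr (p % K)|) hgpos
      refine ⟨d, hd, fun j i hj hi => ?_⟩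
      have hlt : j*K + i < (K+1)*K := by
        calc j*K + i < j*K + K := by omega
          _ = (j+1)*K := by ring
          _ ≤ (K+1)*K := Nat.mul_le_mul_right K (by omega)
      have := h (j*K+i) hlt
      rwa [show j*K+i = K*j+i by ring, Nat.mul_add_div hK, Nat.mul_add_mod,
        Nat.div_eq_of_lt hi, Nat.mod_eq_of_lt hi, Nat.add_zero] at this
  set δ : ℝ := min (min d1 d2) (r 0) with hδdef
  have hδ : 0 < δ := lt_min (lt_min hd1 hd2) (hrpos 0 (by omega))
  have hδgap : ∀ j, j < K → 2*δ < r (j+1) - r j := by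
    intro j hj
    have h1 := hgap j hj
    have h2 : δ ≤ d1 := le_trans (min_le_left _ _) (min_le_left _ _)
    linarith
  have hδdist : ∀ j i, j < K+1 → i < K → δ < |r j - rr i| := by
    intro j i hj hi
    have h2 : δ ≤ d2 := le_trans (min_le_left _ _) (min_le_right _ _)
    linarith [hdist j i hj hi]
  -- disjointness of the δ-intervals
  have hIdisj : ∀ i j, i < j → j < K+1 → r i + δ < r j - δ := by
    intro i j hij hj
    have h1 := hδgap i (by omega)
    have h2 : r (i+1) ≤ r j := by
      rcases Nat.lt_or_ge (i+1) j with h | h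
      · exact le_of_lt (hrord (i+1) j h hj)
      · have : i+1 = j := by omega
        rw [this]
    linarith
  -- baseline sign facts at α0
  have hsgnK : ∀ j, j ≤ K → ∀ y ∈ Set.Icc (r j - δ) (r j + δ),
      0 < (-1:ℝ)^(K-j) * chq K α0 y := by
    intro j hj y hy
    have hpair : 0 < chq K α0 y * chq K α0 (r j) := by
      rw [hrrev, hrrev, ← Finset.prod_mul_distrib]
      apply Finset.prod_pos
      intro i hi
      have hd := hδdist j i (by omega) (Finset.mem_range.mp hi)
      rcases lt_abs.mp hd with h | h
      · have h1 : rr i < y := by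
          have := hy.1; linarith
        have h2 : rr i < r j := by linarith
        exact mul_pos (by linarith) (by linarith)
      · have h1 : y < rr i := by
          have := hy.2; linarith
        have h2 : r j < rr i := by linarith
        exact mul_pos_of_neg_of_neg (by linarith) (by linarith)
    have h1 := hrsig j (by omega)
    nlinarith [mul_pos h1 hpair, sq_nonneg (chq K α0 (r j)), neg_one_sq_pow (K-j)]
  have hsgnlo : ∀ j, j ≤ K → 0 < (-1:ℝ)^(K+1-j) * chq (K+1) α0 (r j - δ) := by
    intro j hj
    rw [hrev]
    apply prod_sign (by omega : j ≤ K+1)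
    · intro i hi
      have := hIdisj i j hi (by omega)
      linarith
    · intro i h1 h2
      have : r j ≤ r i := by
        rcases Nat.lt_or_ge j i with h | h
        · exact le_of_lt (hrord j i h h2)
        · have : j = i := by omega
          rw [this]
      linarith
  have hsgnhi : ∀ j, j ≤ K → 0 < (-1:ℝ)^(K-j) * chq (K+1) α0 (r j + δ) := by
    intro j hj
    rw [hrev]
    have := prod_sign (r := r) (y := r j + δ) (M := K+1) (j := j+1) (by omega) ?_ ?_
    · have he : K+1-(j+1) = K-j := by omega
      rwa [he] at this
    · intro i hi
      have : r i ≤ r j := by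
        rcases Nat.lt_or_ge i j with h | h
        · exact le_of_lt (hrord i j h (by omega))
        · have : i = j := by omega
          rw [this]
      linarith
    · intro i h1 h2
      have := hIdisj j i (by omega) h2
      linarith
  -- eventual sign conditions near α0
  have Hev : ∀ᶠ t in nhds α0, 0 < t ∧ ∀ j ∈ Finset.range (K+1),
      ((∀ y ∈ Set.Icc (r j - δ) (r j + δ), 0 < (-1:ℝ)^(K-j) * chq K t y) ∧
       0 < (-1:ℝ)^(K+1-j) * chq (K+1) t (r j - δ) ∧
       0 < (-1:ℝ)^(K-j) * chq (K+1) t (r j + δ)) := by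
    refine Filter.Eventually.and (eventually_gt_nhds hα0) ?_
    rw [Filter.eventually_all_finset]
    intro j hj
    have hjK : j ≤ K := by
      have := Finset.mem_range.mp hj; omega
    refine Filter.Eventually.and ?_ (Filter.Eventually.and ?_ ?_)
    · -- tube lemma
      set U : Set (ℝ × ℝ) := {p | 0 < (-1:ℝ)^(K-j) * chq K p.1 p.2} with hU
      have hUopen : IsOpen U :=
        isOpen_lt continuous_const (continuous_const.mul (chq_cont K))
      have hsub : ({α0} ×ˢ Set.Icc (r j - δ) (r j + δ)) ⊆ U := by
        rintro ⟨t, y⟩ ⟨ht, hy⟩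
        simp only [Set.mem_singleton_iff] at ht
        subst ht
        exact hsgnK j hjK y hy
      obtain ⟨u', v', hu'o, hv'o, hαu, hIv, huv⟩ := generalized_tube_lemma
        isCompact_singleton isCompact_Icc hUopen hsub
      have hmem : u' ∈ nhds α0 := hu'o.mem_nhds (hαu rfl)
      filter_upwards [hmem] with t ht y hy
      exact huv (show (t, y) ∈ u' ×ˢ v' from Set.mem_prod.mpr ⟨ht, hIv hy⟩)
    · have hc : Continuous fun t => (-1:ℝ)^(K+1-j) * chq (K+1) t (r j - δ) :=
        continuous_const.mul ((chq_cont (K+1)).comp (continuous_id.prodMk continuous_const))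
      exact (hc.tendsto α0).eventually (eventually_gt_nhds (hsgnlo j hjK))
    · have hc : Continuous fun t => (-1:ℝ)^(K-j) * chq (K+1) t (r j + δ) :=
        continuous_const.mul ((chq_cont (K+1)).comp (continuous_id.prodMk continuous_const))
      exact (hc.tendsto α0).eventually (eventually_gt_nhds (hsgnhi j hjK))
  rw [Metric.eventually_nhds_iff] at Hev
  obtain ⟨ε, hε, hball⟩ := Hev
  have hPt : ∀ t : ℝ, α0 - ε < t → t < α0 + ε → 0 < t ∧ ∀ j ∈ Finset.range (K+1),
      ((∀ y ∈ Set.Icc (r j - δ) (r j + δ), 0 < (-1:ℝ)^(K-j) * chq K t y) ∧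
       0 < (-1:ℝ)^(K+1-j) * chq (K+1) t (r j - δ) ∧
       0 < (-1:ℝ)^(K-j) * chq (K+1) t (r j + δ)) := by
    intro t h1 h2
    apply hball
    rw [Real.dist_eq, abs_lt]
    constructor <;> linarith
  refine ⟨ε, hε, ?_⟩
  intro u v hu1 hu0 huv hv2
  -- localization of the roots of chq (K+1) t for t in the ball
  have hloc : ∀ t, α0 - ε < t → t < α0 + ε → 0 < t →
      ∀ j : Fin (K+1), r j.val - δ < x t j ∧ x t j < r j.val + δ := by
    intro t h1 h2 h3
    obtain ⟨_, hP⟩ := hPt t h1 h2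
    have hroot : ∀ j : Fin (K+1), ∃ i : Fin (K+1),
        r j.val - δ < x t i ∧ x t i < r j.val + δ := by
      intro j
      obtain ⟨hPa, hPlo, hPhi⟩ := hP j.val (Finset.mem_range.mpr j.isLt)
      have hjK : j.val ≤ K := by omega
      have hodd : (-1:ℝ)^(K+1-j.val) * (-1:ℝ)^(K-j.val) = -1 := by
        rw [← pow_add]
        exact Odd.neg_one_pow ⟨K-j.val, by omega⟩
      have hprod : chq (K+1) t (r j.val - δ) * chq (K+1) t (r j.val + δ) < 0 := by
        nlinarith
      obtain ⟨y, hy1, hy2, hy3⟩ := chq_root_between (by linarith : r j.val - δ < r j.val + δ) hprod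
      obtain ⟨i, hi⟩ := (hX t h3).2.2.2 y ((chq_zero_iff h3).mpr hy3)
      exact ⟨i, by rw [← hi]; exact hy1, by rw [← hi]; exact hy2⟩
    choose g hg1 hg2 using hroot
    have hgmono : StrictMono g := by
      intro i j hij
      have ha := hg2 i
      have hb := hg1 j
      have hd := hIdisj i.val j.val hij j.isLt
      have : x t (g i) < x t (g j) := by linarith
      exact ((hX t h3).1.lt_iff_lt).mp this
    have hgid : g = id := by
      have hsurj : Function.Surjective g :=
        Finite.injective_iff_surjective.mp hgmono.injective
      haveI : WellFoundedLT (Fin (K+1)) := inferInstance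
      apply (StrictMono.range_inj hgmono strictMono_id).mp
      rw [Set.range_id, Set.range_eq_univ]
      exact hsurj
    intro j
    have h1 := hg1 j
    have h2 := hg2 j
    rw [hgid] at h1 h2
    exact ⟨h1, h2⟩
  -- main comparison
  intro j
  have hlocu := hloc u hu1 (by linarith) hu0
  have hv0 : 0 < v := by linarith
  have hlocv := hloc v (by linarith) hv2 hv0
  set y := x u j with hy
  have hcont : ContinuousOn (fun s => chq (K+1) s y) (Set.Icc u v) :=
    ((chq_cont (K+1)).comp (continuous_id.prodMk continuous_const)).continuousOn
  obtain ⟨t, htIoo, hts⟩ := exists_hasDerivAt_eq_slope (fun s => chq (K+1) s y)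
    (fun s => -((K:ℝ)+1) * chq K s y) huv hcont (fun s _ => chq_hasDeriv K y s)
  have hu0y : chq (K+1) u y = 0 := (chq_zero_iff hu0).mp ((hX u hu0).2.2.1 j)
  have hvy : chq (K+1) v y = (v - u) * (-((K:ℝ)+1) * chq K t y) := by
    rw [eq_div_iff (ne_of_gt (by linarith : (0:ℝ) < v - u))] at hts
    beta_reduce at hts
    linear_combination -hts + hu0y
  -- sign of chq K t y
  have ht0 : 0 < t := by
    have := htIoo.1; linarith
  obtain ⟨_, hPt'⟩ := hPt t (by have := htIoo.1; linarith) (by have := htIoo.2; linarith)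
  obtain ⟨hPa, hPlo, hPhi⟩ := hPt' j.val (Finset.mem_range.mpr j.isLt)
  have hyIcc : y ∈ Set.Icc (r j.val - δ) (r j.val + δ) :=
    ⟨le_of_lt (hlocu j).1, le_of_lt (hlocu j).2⟩
  have hsK := hPa y hyIcc
  -- sign of chq (K+1) v at y : opposite to sign at r j + δ
  obtain ⟨_, hPv⟩ := hPt v (by linarith) hv2
  obtain ⟨hPva, hPvlo, hPvhi⟩ := hPv j.val (Finset.mem_range.mpr j.isLt)
  have hprodv : chq (K+1) v y * chq (K+1) v (r j.val + δ) < 0 := by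
    have h1 : 0 < (K:ℝ)+1 := by positivity
    have h2 : 0 < v - u := by linarith
    have hAA := neg_one_sq_pow (K - j.val)
    have h4 : 0 < chq K t y * chq (K+1) v (r j.val + δ) := by
      calc (0:ℝ) < ((-1)^(K-j.val) * chq K t y)
            * ((-1)^(K-j.val) * chq (K+1) v (r j.val + δ)) := mul_pos hsK hPvhi
        _ = chq K t y * chq (K+1) v (r j.val + δ) := by
            linear_combination (chq K t y * chq (K+1) v (r j.val + δ)) * hAA
    rw [hvy]
    nlinarith [mul_pos (mul_pos h2 h1) h4]
  obtain ⟨z, hz1, hz2, hz3⟩ := chq_root_between (hlocu j).2 hprodv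
  obtain ⟨i, hiz⟩ := (hX v hv0).2.2.2 z ((chq_zero_iff hv0).mpr hz3)
  -- identify i = j
  have hij : i = j := by
    by_contra hne'
    rcases lt_or_gt_of_ne hne' with h | h
    · have h1 := (hlocv i).2
      have h2 := hIdisj i.val j.val h j.isLt
      have := (hlocu j).1
      rw [hiz] at hz1
      linarith
    · have h1 := (hlocv i).1
      have h2 := hIdisj j.val i.val h i.isLt
      rw [hiz] at hz2
      linarith
  rw [hij] at hiz
  rw [← hiz]
  exact hz1

lemma cspec_exists (K : ℕ) (α : ℝ) (hα : 0 < α) : ∃ r : Fin (K+1) → ℝ, CSpec (K+1) α r := by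
  obtain ⟨r, hord, hpos, hev, _⟩ := RE_eval α hα (K+1)
  refine ⟨fun j => r j.val, ?_, ?_, ?_, ?_⟩
  · intro i j hij
    exact hord i.val j.val hij j.isLt
  · exact fun j => Set.mem_Ioi.mpr (hpos j.val j.isLt)
  · intro j
    rw [chq_zero_iff hα, hev]
    exact Finset.prod_eq_zero (Finset.mem_range.mpr j.isLt) (by ring)
  · intro y hy
    rw [chq_zero_iff hα, hev] at hy
    obtain ⟨i, hi, h0⟩ := Finset.prod_eq_zero_iff.mp hy
    exact ⟨⟨i, Finset.mem_range.mp hi⟩, by linarith [sub_eq_zero.mp h0]⟩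

/-- zeros of Charlier polynomials: location and monotonicity in `α`. -/
theorem stmt_3 (n : ℕ) (hn : 1 ≤ n) :
    ∃ x : ℝ → Fin n → ℝ,
      (∀ α : ℝ, 0 < α →
        StrictMono (x α) ∧
        (∀ j, x α j ∈ Set.Ioi (0 : ℝ)) ∧
        (∀ j, charlierPoly n α (x α j) = 0) ∧
        (∀ y : ℝ, charlierPoly n α y = 0 → ∃ j, y = x α j)) ∧
      (∀ j, StrictMonoOn (fun α => x α j) (Set.Ioi 0)) := by
  obtain ⟨K, rfl⟩ : ∃ K, n = K + 1 := ⟨n - 1, by omega⟩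
  set x : ℝ → Fin (K+1) → ℝ :=
    fun α => if h : 0 < α then (cspec_exists K α h).choose else fun _ => 0 with hx
  have hX : ∀ t, 0 < t → CSpec (K+1) t (x t) := by
    intro t ht
    rw [hx]
    simp only [dif_pos ht]
    exact (cspec_exists K t ht).choose_spec
  refine ⟨x, fun α hα => hX α hα, ?_⟩
  intro j
  apply strictMonoOn_of_local
  intro a ha
  obtain ⟨ε, hε, h⟩ := local_mono K x hX a ha
  exact ⟨ε, hε, fun u v h1 h2 h3 h4 => h u v h1 h2 h3 h4 j⟩
end
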